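/- arXiv:1604.07451 — 6 statements merged into one kernel-verified Lean document; each statement's English description precedes it below -/
import Mathlib

section
/- Let X ∈ ℝ^{n×p} with rows x_i and let S = (1/n)XᵀX. For every lower-triangular p×p real matrix L, tr(S LᵀL) = (1/n)·Σ_{r=1}^p ‖X_{1:r}(L_{r,1:r})ᵀ‖₂², where X_{1:r} is the matrix of the first r columns of X and L_{r,1:r} is the row vector of the first r entries of row r of L. Consequently, for any λ ≥ 0 and weights w_{ℓm} > 0, the penalized objective −2Σ_{r=1}^p log L_{rr} + (1/n)Σ_{i=1}^n ‖L x_i‖₂² + λΣ_{r=2}^p P_r(L_{r·}) equals (−2 log L_{11} + (1/n)‖X_1 L_{11}‖₂²) + Σ_{r=2}^p F_r((L_{r,1:r})ᵀ); hence a lower-triangular L with positive diagonal minimizes the penalized objective if and only if for each r ≥ 2 the vector (L_{r,1:r})ᵀ minimizes the r-th row subproblem and, provided S_{11} > 0, L_{11} = 1/√(S_{11}). -/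
open Matrix


noncomputable def gfun (n p : ℕ) (X : Matrix (Fin n) (Fin p) ℝ) (lam : ℝ) (w : ℕ → ℕ → ℝ)
    (r : Fin p) (β : Fin p → ℝ) : ℝ :=
  -2 * Real.log (β r)
    + (1 / (n : ℝ)) * ∑ i : Fin n,
        (∑ j ∈ Finset.univ.filter (fun j : Fin p => j ≤ r), X i j * β j) ^ 2
    + lam * ∑ ℓ ∈ Finset.range (r : ℕ),
        Real.sqrt (∑ m ∈ Finset.univ.filter (fun m : Fin p => (m : ℕ) ≤ ℓ),
          w ℓ (m : ℕ) ^ 2 * β m ^ 2)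

lemma gfun_congr (n p : ℕ) (X : Matrix (Fin n) (Fin p) ℝ) (lam : ℝ) (w : ℕ → ℕ → ℝ)
    (r : Fin p) (β β' : Fin p → ℝ) (h : ∀ j : Fin p, j ≤ r → β j = β' j) :
    gfun n p X lam w r β = gfun n p X lam w r β' := by
  unfold gfun
  have hB : (∑ i : Fin n, (∑ j ∈ Finset.univ.filter (fun j : Fin p => j ≤ r), X i j * β j) ^ 2)
      = ∑ i : Fin n, (∑ j ∈ Finset.univ.filter (fun j : Fin p => j ≤ r), X i j * β' j) ^ 2 := by
    refine Finset.sum_congr rfl fun i _ => ?_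
    congr 1
    refine Finset.sum_congr rfl fun j hj => ?_
    rw [h j (Finset.mem_filter.1 hj).2]
  have hC : (∑ ℓ ∈ Finset.range (r : ℕ),
        Real.sqrt (∑ m ∈ Finset.univ.filter (fun m : Fin p => (m : ℕ) ≤ ℓ),
          w ℓ (m : ℕ) ^ 2 * β m ^ 2))
      = ∑ ℓ ∈ Finset.range (r : ℕ),
        Real.sqrt (∑ m ∈ Finset.univ.filter (fun m : Fin p => (m : ℕ) ≤ ℓ),
          w ℓ (m : ℕ) ^ 2 * β' m ^ 2) := by
    refine Finset.sum_congr rfl fun ℓ hℓ => ?_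
    congr 1
    refine Finset.sum_congr rfl fun m hm => ?_
    have hmℓ : (m : ℕ) ≤ ℓ := (Finset.mem_filter.1 hm).2
    have hℓr : ℓ < (r : ℕ) := Finset.mem_range.1 hℓ
    have hmr : m ≤ r := by
      have : (m : ℕ) ≤ (r : ℕ) := by omega
      exact this
    rw [h m hmr]
  rw [h r le_rfl, hB, hC]

lemma scalar_le {c t : ℝ} (hc : 0 < c) (ht : 0 < t) :
    -2 * Real.log (1 / Real.sqrt c) + c * (1 / Real.sqrt c) ^ 2 ≤ -2 * Real.log t + c * t ^ 2 := by
  have h1 : Real.log (1 / Real.sqrt c) = -(Real.log c / 2) := by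
    rw [one_div, Real.log_inv, Real.log_sqrt hc.le]
  have h2 : (1 / Real.sqrt c) ^ 2 = 1 / c := by
    rw [div_pow, one_pow, Real.sq_sqrt hc.le]
  have hu : 0 < c * t ^ 2 := by positivity
  have hlog : Real.log (c * t ^ 2) ≤ c * t ^ 2 - 1 := Real.log_le_sub_one_of_pos hu
  rw [Real.log_mul hc.ne' (by positivity), Real.log_pow] at hlog
  rw [h1, h2]
  have : c * (1 / c) = 1 := mul_one_div_cancel hc.ne'
  rw [this]
  push_cast at hlog
  nlinarith [hlog]

lemma scalar_eq {c t : ℝ} (hc : 0 < c) (ht : 0 < t)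
    (h : -2 * Real.log t + c * t ^ 2 ≤ -2 * Real.log (1 / Real.sqrt c) + c * (1 / Real.sqrt c) ^ 2) :
    t = 1 / Real.sqrt c := by
  have h1 : Real.log (1 / Real.sqrt c) = -(Real.log c / 2) := by
    rw [one_div, Real.log_inv, Real.log_sqrt hc.le]
  have h2 : (1 / Real.sqrt c) ^ 2 = 1 / c := by
    rw [div_pow, one_pow, Real.sq_sqrt hc.le]
  have hu : 0 < c * t ^ 2 := by positivity
  have hct : c * t ^ 2 = 1 := by
    by_contra hne
    have hlog : Real.log (c * t ^ 2) < c * t ^ 2 - 1 := Real.log_lt_sub_one_of_pos hu hne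
    rw [Real.log_mul hc.ne' (by positivity), Real.log_pow] at hlog
    rw [h1, h2] at h
    have : c * (1 / c) = 1 := mul_one_div_cancel hc.ne'
    rw [this] at h
    push_cast at hlog
    nlinarith
  have ht2 : t ^ 2 = 1 / c := by field_simp at hct ⊢; linarith
  calc t = Real.sqrt (t ^ 2) := (Real.sqrt_sq ht.le).symm
    _ = Real.sqrt (1 / c) := by rw [ht2]
    _ = 1 / Real.sqrt c := by rw [one_div, Real.sqrt_inv, one_div]


/-- decoupling, Appendix `online:decouple`: with `S = (1/n)XᵀX`, for every
lower-triangular `L` the trace identity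
`tr(S Lᵀ L) = (1/n) Σ_r ‖X_{1:r}(L_{r,1:r})ᵀ‖₂²` holds; the penalized objective decomposes
as the first-row term plus `Σ_{r ≥ 2} F_r(L_{r,1:r})`; and a lower-triangular `L` with
positive diagonal minimizes the penalized objective over such matrices iff each row
`r ≥ 2` minimizes the `r`-th row subproblem `F_r` and (given `S₁₁ > 0`)
`L₁₁ = 1/√(S₁₁)`.  Rows/columns are 0-based: row `0` is the paper's row `1`. -/
theorem stmt_1 (n p : ℕ) (hp : 0 < p)
    (X : Matrix (Fin n) (Fin p) ℝ)
    (lam : ℝ) (hlam : 0 ≤ lam)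
    (w : ℕ → ℕ → ℝ) (hw : ∀ ℓ m : ℕ, 0 < w ℓ m)
    (S : Matrix (Fin p) (Fin p) ℝ) (hS : S = (1 / (n : ℝ)) • (Xᵀ * X))
    (hS00 : 0 < S ⟨0, hp⟩ ⟨0, hp⟩)
    (F : Fin p → (Fin p → ℝ) → ℝ)
    (hF : ∀ (r : Fin p) (β : Fin p → ℝ),
      F r β = -2 * Real.log (β r)
        + (1 / (n : ℝ)) * ∑ i : Fin n,
            (∑ j ∈ Finset.univ.filter (fun j : Fin p => j ≤ r), X i j * β j) ^ 2
        + lam * ∑ ℓ ∈ Finset.range (r : ℕ),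
            Real.sqrt (∑ m ∈ Finset.univ.filter (fun m : Fin p => (m : ℕ) ≤ ℓ),
              w ℓ (m : ℕ) ^ 2 * β m ^ 2))
    (obj : Matrix (Fin p) (Fin p) ℝ → ℝ)
    (hobj : ∀ L : Matrix (Fin p) (Fin p) ℝ,
      obj L = -2 * ∑ r : Fin p, Real.log (L r r)
        + (1 / (n : ℝ)) * ∑ i : Fin n, ∑ j : Fin p, (L.mulVec (fun k => X i k) j) ^ 2
        + lam * ∑ r : Fin p, ∑ ℓ ∈ Finset.range (r : ℕ),
            Real.sqrt (∑ m ∈ Finset.univ.filter (fun m : Fin p => (m : ℕ) ≤ ℓ),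
              w ℓ (m : ℕ) ^ 2 * (L r m) ^ 2)) :
    -- (a) the trace identity
    (∀ L : Matrix (Fin p) (Fin p) ℝ, (∀ r k : Fin p, r < k → L r k = 0) →
      Matrix.trace (S * Lᵀ * L)
        = (1 / (n : ℝ)) * ∑ r : Fin p, ∑ i : Fin n,
            (∑ j ∈ Finset.univ.filter (fun j : Fin p => j ≤ r), X i j * L r j) ^ 2) ∧
    -- (b) the decomposition of the penalized objective
    (∀ L : Matrix (Fin p) (Fin p) ℝ, (∀ r k : Fin p, r < k → L r k = 0) →
      obj L = (-2 * Real.log (L ⟨0, hp⟩ ⟨0, hp⟩)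
          + (1 / (n : ℝ)) * ∑ i : Fin n, (X i ⟨0, hp⟩ * L ⟨0, hp⟩ ⟨0, hp⟩) ^ 2)
        + ∑ r ∈ Finset.univ.filter (fun r : Fin p => 1 ≤ (r : ℕ)), F r (fun j => L r j)) ∧
    -- (c) minimizers of the penalized objective are exactly rowwise minimizers
    (∀ L : Matrix (Fin p) (Fin p) ℝ,
      ((∀ r k : Fin p, r < k → L r k = 0) ∧ (∀ r : Fin p, 0 < L r r)) →
      ((∀ M : Matrix (Fin p) (Fin p) ℝ,
          ((∀ r k : Fin p, r < k → M r k = 0) ∧ (∀ r : Fin p, 0 < M r r)) →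
          obj L ≤ obj M) ↔
        ((∀ r : Fin p, 1 ≤ (r : ℕ) → ∀ β : Fin p → ℝ, 0 < β r →
            F r (fun j => L r j) ≤ F r β) ∧
          L ⟨0, hp⟩ ⟨0, hp⟩ = 1 / Real.sqrt (S ⟨0, hp⟩ ⟨0, hp⟩)))) := by
  set z : Fin p := ⟨0, hp⟩ with hz
  have hgF : ∀ (r : Fin p) (β : Fin p → ℝ), gfun n p X lam w r β = F r β := by
    intro r β; rw [hF]; rfl
  -- widen/restrict sums for lower-triangular rows
  have hwide : ∀ (L : Matrix (Fin p) (Fin p) ℝ), (∀ r k : Fin p, r < k → L r k = 0) →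
      ∀ (r : Fin p) (i : Fin n),
      (∑ j ∈ Finset.univ.filter (fun j : Fin p => j ≤ r), X i j * L r j)
        = ∑ k : Fin p, X i k * L r k := by
    intro L hL r i
    symm
    rw [← Finset.sum_filter_add_sum_filter_not Finset.univ (fun k : Fin p => k ≤ r)]
    have hzz : ∑ k ∈ Finset.univ.filter (fun k : Fin p => ¬ k ≤ r), X i k * L r k = 0 :=
      Finset.sum_eq_zero fun k hk => by
        rw [hL r k (lt_of_not_ge (Finset.mem_filter.1 hk).2), mul_zero]
    rw [hzz, add_zero]
  -- (a)
  have ha : ∀ L : Matrix (Fin p) (Fin p) ℝ, (∀ r k : Fin p, r < k → L r k = 0) →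
      Matrix.trace (S * Lᵀ * L)
        = (1 / (n : ℝ)) * ∑ r : Fin p, ∑ i : Fin n,
            (∑ j ∈ Finset.univ.filter (fun j : Fin p => j ≤ r), X i j * L r j) ^ 2 := by
    intro L hL
    calc Matrix.trace (S * Lᵀ * L)
        = (1 / (n : ℝ)) * Matrix.trace ((X * Lᵀ)ᵀ * (X * Lᵀ)) := by
          rw [hS, Matrix.smul_mul, Matrix.smul_mul, Matrix.trace_smul, smul_eq_mul]
          congr 1
          rw [Matrix.trace_mul_comm]
          rw [Matrix.transpose_mul, Matrix.transpose_transpose]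
          simp [Matrix.mul_assoc]
      _ = (1 / (n : ℝ)) * ∑ r : Fin p, ∑ i : Fin n, (∑ k : Fin p, X i k * L r k) ^ 2 := by
          congr 1
          simp only [Matrix.trace, Matrix.diag, Matrix.mul_apply, Matrix.transpose_apply,
            pow_two]
      _ = (1 / (n : ℝ)) * ∑ r : Fin p, ∑ i : Fin n,
            (∑ j ∈ Finset.univ.filter (fun j : Fin p => j ≤ r), X i j * L r j) ^ 2 := by
          congr 1
          refine Finset.sum_congr rfl fun r _ => Finset.sum_congr rfl fun i _ => ?_
          rw [hwide L hL r i]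
  -- decomposition
  have hdec : ∀ L : Matrix (Fin p) (Fin p) ℝ, (∀ r k : Fin p, r < k → L r k = 0) →
      obj L = ∑ r : Fin p, gfun n p X lam w r (fun j => L r j) := by
    intro L hL
    rw [hobj]
    have h2 : (∑ i : Fin n, ∑ j : Fin p, (L.mulVec (fun k => X i k) j) ^ 2)
        = ∑ r : Fin p, ∑ i : Fin n,
            (∑ j ∈ Finset.univ.filter (fun j : Fin p => j ≤ r), X i j * L r j) ^ 2 := by
      rw [Finset.sum_comm]
      refine Finset.sum_congr rfl fun r _ => Finset.sum_congr rfl fun i _ => ?_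
      rw [hwide L hL r i]
      congr 1
      simp only [Matrix.mulVec, dotProduct]
      exact Finset.sum_congr rfl fun k _ => mul_comm _ _
    rw [h2, Finset.mul_sum, Finset.mul_sum, Finset.mul_sum,
      ← Finset.sum_add_distrib, ← Finset.sum_add_distrib]
    exact Finset.sum_congr rfl fun r _ => rfl
  -- the bottom index
  have hzv : (z : ℕ) = 0 := rfl
  have hfz : Finset.univ.filter (fun j : Fin p => j ≤ z) = {z} := by
    ext j
    simp only [Finset.mem_filter, Finset.mem_univ, true_and, Finset.mem_singleton,
      Fin.le_def, Fin.ext_iff, hzv]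
    omega
  have hgz : ∀ β : Fin p → ℝ, gfun n p X lam w z β
      = -2 * Real.log (β z) + (1 / (n : ℝ)) * ∑ i : Fin n, (X i z * β z) ^ 2 := by
    intro β
    have hz0 : (z : ℕ) = 0 := rfl
    simp [gfun, hfz, hz0]
  have hc : S z z = (1 / (n : ℝ)) * ∑ i : Fin n, X i z ^ 2 := by
    rw [hS]
    simp [Matrix.mul_apply, Matrix.transpose_apply, sq]
  have hgz2 : ∀ β : Fin p → ℝ, gfun n p X lam w z β
      = -2 * Real.log (β z) + S z z * (β z) ^ 2 := by
    intro β
    rw [hgz, hc]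
    have h3 : ∑ i : Fin n, (X i z * β z) ^ 2 = (∑ i : Fin n, X i z ^ 2) * (β z) ^ 2 := by
      rw [Finset.sum_mul]
      exact Finset.sum_congr rfl fun i _ => by ring
    rw [h3]; ring
  have hfilter : Finset.univ.filter (fun r : Fin p => 1 ≤ (r : ℕ)) = Finset.univ.erase z := by
    ext r
    simp only [Finset.mem_filter, Finset.mem_univ, true_and, Finset.mem_erase, and_true,
      ne_eq, Fin.ext_iff, hzv]
    omega
  -- (b)
  have hb : ∀ L : Matrix (Fin p) (Fin p) ℝ, (∀ r k : Fin p, r < k → L r k = 0) →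
      obj L = (-2 * Real.log (L z z)
          + (1 / (n : ℝ)) * ∑ i : Fin n, (X i z * L z z) ^ 2)
        + ∑ r ∈ Finset.univ.filter (fun r : Fin p => 1 ≤ (r : ℕ)), F r (fun j => L r j) := by
    intro L hL
    rw [hdec L hL, ← Finset.add_sum_erase Finset.univ _ (Finset.mem_univ z), hfilter]
    congr 1
    · exact hgz _
    · exact Finset.sum_congr rfl fun r _ => hgF r _
  refine ⟨ha, hb, ?_⟩
  -- (c)
  rintro L ⟨hLtri, hLdiag⟩
  constructor
  · intro hmin
    constructor
    · intro r hr β hβ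
      set M : Matrix (Fin p) (Fin p) ℝ :=
        fun r' j => if r' = r then (if j ≤ r then β j else 0) else L r' j with hM
      have hMtri : ∀ a k : Fin p, a < k → M a k = 0 := by
        intro a k hak
        simp only [hM]
        split_ifs with h1 h2
        · exact absurd h2 (not_le.2 (h1 ▸ hak))
        · rfl
        · exact hLtri a k hak
      have hMdiag : ∀ a : Fin p, 0 < M a a := by
        intro a
        simp only [hM]
        split_ifs with h1 h2
        · exact h1 ▸ hβ
        · exact absurd h1.le h2
        · exact hLdiag a
      have hle := hmin M ⟨hMtri, hMdiag⟩
      rw [hdec L hLtri, hdec M hMtri,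
        ← Finset.add_sum_erase Finset.univ _ (Finset.mem_univ r),
        ← Finset.add_sum_erase Finset.univ
          (fun a => gfun n p X lam w a (fun j => M a j)) (Finset.mem_univ r)] at hle
      have hrest : ∑ a ∈ Finset.univ.erase r, gfun n p X lam w a (fun j => L a j)
          = ∑ a ∈ Finset.univ.erase r, gfun n p X lam w a (fun j => M a j) := by
        refine Finset.sum_congr rfl fun a ha => ?_
        have ha' : a ≠ r := (Finset.mem_erase.1 ha).1
        have : (fun j => M a j) = fun j => L a j := by
          funext j; simp [hM, ha']
        rw [this]
      rw [hrest] at hle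
      have hle2 : gfun n p X lam w r (fun j => L r j) ≤ gfun n p X lam w r (fun j => M r j) :=
        le_of_add_le_add_right hle
      have hMr : gfun n p X lam w r (fun j => M r j) = gfun n p X lam w r β := by
        refine gfun_congr n p X lam w r _ _ fun j hj => ?_
        simp [hM, hj]
      rw [hMr, hgF, hgF] at hle2
      exact hle2
    · set t : ℝ := 1 / Real.sqrt (S z z) with htdef
      have ht : 0 < t := by
        rw [htdef]
        positivity
      set M : Matrix (Fin p) (Fin p) ℝ :=
        fun r' j => if r' = z then (if j ≤ z then t else 0) else L r' j with hM
      have hMtri : ∀ a k : Fin p, a < k → M a k = 0 := by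
        intro a k hak
        simp only [hM]
        split_ifs with h1 h2
        · exact absurd h2 (not_le.2 (h1 ▸ hak))
        · rfl
        · exact hLtri a k hak
      have hMdiag : ∀ a : Fin p, 0 < M a a := by
        intro a
        simp only [hM]
        split_ifs with h1 h2
        · exact ht
        · exact absurd h1.le h2
        · exact hLdiag a
      have hle := hmin M ⟨hMtri, hMdiag⟩
      rw [hdec L hLtri, hdec M hMtri,
        ← Finset.add_sum_erase Finset.univ _ (Finset.mem_univ z),
        ← Finset.add_sum_erase Finset.univ
          (fun a => gfun n p X lam w a (fun j => M a j)) (Finset.mem_univ z)] at hle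
      have hrest : ∑ a ∈ Finset.univ.erase z, gfun n p X lam w a (fun j => L a j)
          = ∑ a ∈ Finset.univ.erase z, gfun n p X lam w a (fun j => M a j) := by
        refine Finset.sum_congr rfl fun a ha => ?_
        have ha' : a ≠ z := (Finset.mem_erase.1 ha).1
        have : (fun j => M a j) = fun j => L a j := by
          funext j; simp [hM, ha']
        rw [this]
      rw [hrest] at hle
      have hle2 : gfun n p X lam w z (fun j => L z j) ≤ gfun n p X lam w z (fun j => M z j) :=
        le_of_add_le_add_right hle
      rw [hgz2, hgz2] at hle2
      have hMz : M z z = t := by simp [hM]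
      rw [hMz] at hle2
      exact scalar_eq hS00 (hLdiag z) hle2
  · rintro ⟨hrow, h00⟩ M ⟨hMtri, hMdiag⟩
    rw [hdec L hLtri, hdec M hMtri]
    refine Finset.sum_le_sum fun r _ => ?_
    by_cases hr : r = z
    · subst hr
      rw [hgz2, hgz2]
      rw [h00]
      exact scalar_le hS00 (hMdiag z)
    · have hr1 : 1 ≤ (r : ℕ) := by
        have : (r : ℕ) ≠ 0 := fun h0 => hr (Fin.ext (by simp [h0, hz]))
        omega
      rw [hgF, hgF]
      exact hrow r hr1 (fun j => M r j) (hMdiag r)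
end

section
/- Let X ∈ ℝ^{n×r} with r ≥ 2, S = (1/n)XᵀX, ρ > 0, and u, γ ∈ ℝ^r; write the subscript −r for the first r−1 coordinates. Then the matrix 2S_{−r,−r} + ρI is invertible; the quantity A = 4 S_{r,−r}(2S_{−r,−r}+ρI)^{−1}S_{−r,r} − 2S_{rr} − ρ satisfies A < 0; and, with B = 2S_{r,−r}(2S_{−r,−r}+ρI)^{−1}(u_{−r} − ργ_{−r}) − u_r + ργ_r, the function β ↦ −2 log β_r + (1/n)‖Xβ‖₂² + (β − γ)ᵀu + (ρ/2)‖β − γ‖₂² has a unique minimizer over {β ∈ ℝ^r : β_r > 0}, given by β_r = (−B − √(B² − 8A))/(2A) > 0 and β_{−r} = −(2S_{−r,−r}+ρI)^{−1}(2S_{−r,r}β_r + u_{−r} − ργ_{−r}). -/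
open Matrix

private lemma mulVec_snoc' {k : ℕ} (T : Matrix (Fin (k+1)) (Fin (k+1)) ℝ) (e : Fin k → ℝ)
    (a : ℝ) (i : Fin (k+1)) :
    T.mulVec (Fin.snoc e a) i = (∑ j : Fin k, T i j.castSucc * e j) + T i (Fin.last k) * a := by
  simp [Matrix.mulVec, dotProduct, Fin.sum_univ_castSucc]

private lemma dot_snoc' {k : ℕ} (e : Fin k → ℝ) (a : ℝ) (z : Fin (k+1) → ℝ) :
    dotProduct (Fin.snoc e a : Fin (k+1) → ℝ) z
      = (∑ i : Fin k, e i * z i.castSucc) + a * z (Fin.last k) := by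
  simp [dotProduct, Fin.sum_univ_castSucc]

private lemma snoc_quad' {k : ℕ} (T : Matrix (Fin (k+1)) (Fin (k+1)) ℝ) (e : Fin k → ℝ) (a : ℝ) :
    dotProduct (Fin.snoc e a : Fin (k+1) → ℝ) (T.mulVec (Fin.snoc e a)) =
      (∑ i : Fin k, e i * ∑ j : Fin k, T i.castSucc j.castSucc * e j)
      + a * (∑ i : Fin k, e i * T i.castSucc (Fin.last k))
      + a * (∑ j : Fin k, T (Fin.last k) j.castSucc * e j)
      + a * a * T (Fin.last k) (Fin.last k) := by
  rw [dot_snoc']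
  simp only [mulVec_snoc']
  have h1 : ∑ i : Fin k, e i * ((∑ j : Fin k, T i.castSucc j.castSucc * e j)
        + T i.castSucc (Fin.last k) * a)
      = (∑ i : Fin k, e i * ∑ j : Fin k, T i.castSucc j.castSucc * e j)
        + a * (∑ i : Fin k, e i * T i.castSucc (Fin.last k)) := by
    rw [Finset.mul_sum, ← Finset.sum_add_distrib]
    exact Finset.sum_congr rfl fun i _ => by ring
  rw [h1]; ring


set_option maxHeartbeats 2000000 in
/-- closed form of the ADMM `β`-update.  Here `r = k + 1 ≥ 2`, the last
coordinate plays the role of the `r`-th coordinate, and `−r` denotes the first `k = r−1`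
coordinates (via `Fin.castSucc`).  `S = (1/n) Xᵀ X`, `M = 2 S_{−r,−r} + ρ I` is invertible,
`A < 0`, and the function
`β ↦ −2 log β_r + (1/n)‖Xβ‖₂² + (β−γ)ᵀu + (ρ/2)‖β−γ‖₂²`
has the stated unique minimizer over `{β : β_r > 0}`. -/
theorem stmt_3 (n k : ℕ) (hk : 1 ≤ k)
    (X : Matrix (Fin n) (Fin (k + 1)) ℝ)
    (ρ : ℝ) (hρ : 0 < ρ) (u γ : Fin (k + 1) → ℝ)
    (S : Matrix (Fin (k + 1)) (Fin (k + 1)) ℝ)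
    (hS : S = (1 / (n : ℝ)) • (Xᵀ * X))
    (M : Matrix (Fin k) (Fin k) ℝ)
    (hM : M = (2 : ℝ) • S.submatrix Fin.castSucc Fin.castSucc + ρ • (1 : Matrix (Fin k) (Fin k) ℝ))
    (A B : ℝ)
    (hA : A = 4 * dotProduct (fun i : Fin k => S (Fin.last k) i.castSucc)
              (M⁻¹.mulVec (fun i : Fin k => S i.castSucc (Fin.last k)))
            - 2 * S (Fin.last k) (Fin.last k) - ρ)
    (hB : B = 2 * dotProduct (fun i : Fin k => S (Fin.last k) i.castSucc)
              (M⁻¹.mulVec (fun i : Fin k => u i.castSucc - ρ * γ i.castSucc))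
            - u (Fin.last k) + ρ * γ (Fin.last k))
    (βr : ℝ) (hβr : βr = (-B - Real.sqrt (B ^ 2 - 8 * A)) / (2 * A))
    (βstar : Fin (k + 1) → ℝ)
    (hβstar : βstar = Fin.snoc
      (fun i : Fin k => -(M⁻¹.mulVec
        (fun j : Fin k => 2 * S j.castSucc (Fin.last k) * βr + u j.castSucc - ρ * γ j.castSucc) i))
      βr)
    (f : (Fin (k + 1) → ℝ) → ℝ)
    (hf : ∀ β : Fin (k + 1) → ℝ,
      f β = -2 * Real.log (β (Fin.last k)) + (1 / (n : ℝ)) * ∑ i : Fin n, (X.mulVec β i) ^ 2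
        + (∑ j : Fin (k + 1), (β j - γ j) * u j)
        + (ρ / 2) * ∑ j : Fin (k + 1), (β j - γ j) ^ 2) :
    IsUnit M.det ∧ A < 0 ∧ 0 < βr ∧
      (∀ β : Fin (k + 1) → ℝ, 0 < β (Fin.last k) → f βstar ≤ f β) ∧
      (∀ β : Fin (k + 1) → ℝ, 0 < β (Fin.last k) → f β = f βstar → β = βstar) := by
  -- positive semidefiniteness of S
  have hpsd : ∀ d : Fin (k+1) → ℝ, 0 ≤ dotProduct d (S.mulVec d) := by
    intro d
    rw [hS, Matrix.smul_mulVec, dotProduct_smul, ← Matrix.mulVec_mulVec,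
      Matrix.dotProduct_mulVec, Matrix.vecMul_transpose]
    have h1 : (0:ℝ) ≤ dotProduct (X.mulVec d) (X.mulVec d) :=
      Finset.sum_nonneg fun i _ => mul_self_nonneg _
    have h2 : (0:ℝ) ≤ 1 / (n:ℝ) := by positivity
    simpa using mul_nonneg h2 h1
  have hsym : Sᵀ = S := by rw [hS]; simp [Matrix.transpose_smul, Matrix.transpose_mul]
  have hswap : ∀ x y : Fin (k+1) → ℝ,
      dotProduct x (S.mulVec y) = dotProduct y (S.mulVec x) := by
    intro x y
    rw [Matrix.dotProduct_mulVec, ← Matrix.vecMul_transpose, hsym, dotProduct_comm]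
  -- expansion of e ⬝ M e
  have hMe : ∀ e : Fin k → ℝ, dotProduct e (M.mulVec e) =
      2 * (∑ i : Fin k, e i * ∑ j : Fin k, S i.castSucc j.castSucc * e j)
      + ρ * ∑ i : Fin k, e i * e i := by
    intro e
    have hmv : ∀ i, (M.mulVec e) i
        = 2 * (∑ j : Fin k, S i.castSucc j.castSucc * e j) + ρ * e i := by
      intro i
      rw [hM]
      simp only [Matrix.mulVec, dotProduct, Matrix.add_apply, Matrix.smul_apply,
        Matrix.one_apply, smul_eq_mul, add_mul, ite_mul, zero_mul, Finset.sum_add_distrib,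
        Finset.sum_ite_eq, Finset.mem_univ, if_pos, Finset.mul_sum]
      refine congrArg₂ (· + ·) (Finset.sum_congr rfl fun j _ => by
        simp [Matrix.submatrix_apply]; ring) ?_
      simp [mul_ite, ite_mul, Finset.sum_ite_eq]
    simp only [dotProduct, hmv]
    rw [Finset.mul_sum, Finset.mul_sum, ← Finset.sum_add_distrib]
    exact Finset.sum_congr rfl fun i _ => by ring
  -- lower bound for e ⬝ M e
  have hMepos : ∀ e : Fin k → ℝ, ρ * ∑ i, e i * e i ≤ dotProduct e (M.mulVec e) := by
    intro e
    have h0 := hpsd (Fin.snoc e 0)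
    rw [snoc_quad'] at h0
    simp only [mul_zero, zero_mul, add_zero, mul_self_nonneg] at h0
    rw [hMe e]
    nlinarith [h0]
  -- invertibility of M
  have hdet : IsUnit M.det := by
    rw [isUnit_iff_ne_zero]
    intro hd0
    obtain ⟨v, hv0, hMv⟩ := (Matrix.exists_mulVec_eq_zero_iff).mpr hd0
    have h1 : dotProduct v (M.mulVec v) = 0 := by rw [hMv]; simp [dotProduct]
    have h2 := hMepos v
    rw [h1] at h2
    have h3 : ∑ i, v i * v i = 0 := by
      have h4 : (0:ℝ) ≤ ∑ i, v i * v i := Finset.sum_nonneg fun i _ => mul_self_nonneg _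
      nlinarith
    apply hv0
    funext i
    have := (Finset.sum_eq_zero_iff_of_nonneg (fun i _ => mul_self_nonneg (v i))).mp h3 i
      (Finset.mem_univ i)
    exact mul_self_eq_zero.mp this
  have hMinv : ∀ z : Fin k → ℝ, M.mulVec (M⁻¹.mulVec z) = z := by
    intro z
    rw [Matrix.mulVec_mulVec, Matrix.mul_nonsing_inv _ hdet, Matrix.one_mulVec]
  -- A ≤ -ρ < 0
  set w : Fin k → ℝ := fun i => S i.castSucc (Fin.last k) with hw
  set wr : Fin k → ℝ := fun i => S (Fin.last k) i.castSucc with hwr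
  have hAneg : A ≤ -ρ := by
    set e : Fin k → ℝ := (-2 : ℝ) • M⁻¹.mulVec w with he
    have hMee : M.mulVec e = (-2 : ℝ) • w := by
      rw [he, Matrix.mulVec_smul, hMinv]
    have h1 : dotProduct e (M.mulVec e) = -2 * ∑ i, e i * w i := by
      rw [hMee]
      simp [dotProduct, Finset.mul_sum]
      exact Finset.sum_congr rfl fun i _ => by ring
    have h2 : ∑ j : Fin k, wr j * e j = -2 * dotProduct wr (M⁻¹.mulVec w) := by
      rw [he]
      simp [dotProduct, Finset.mul_sum]
      exact Finset.sum_congr rfl fun i _ => by ring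
    have h3 := hpsd (Fin.snoc e 1)
    rw [snoc_quad'] at h3
    have h4 := hMe e
    have h5 : (0:ℝ) ≤ ∑ i, e i * e i := Finset.sum_nonneg fun i _ => mul_self_nonneg _
    -- the sums appearing in snoc_quad' for T = S:
    -- ∑ i, e i * S i.castSucc (last) = ∑ i, e i * w i, and ∑ j, S last j.cs * e j = ∑ wr j * e j
    have hA' : A = 4 * dotProduct wr (M⁻¹.mulVec w) - 2 * S (Fin.last k) (Fin.last k) - ρ := hA
    nlinarith [h3, h4, h1, h2, h5]
  have hA0 : A < 0 := lt_of_le_of_lt hAneg (by linarith)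
  have hAne : A ≠ 0 := ne_of_lt hA0
  -- βr > 0
  have hDpos : (0:ℝ) ≤ B^2 - 8*A := by nlinarith
  have ht : Real.sqrt (B^2 - 8*A) ^ 2 = B^2 - 8*A := Real.sq_sqrt hDpos
  have hβrpos : 0 < βr := by
    have htpos : |B| < Real.sqrt (B^2 - 8*A) := by
      nlinarith [Real.sqrt_nonneg (B^2 - 8*A), abs_nonneg B, sq_abs B]
    have hnum : -B - Real.sqrt (B^2-8*A) < 0 := by
      have := le_abs_self B
      linarith [neg_abs_le B]
    rw [hβr]
    exact div_pos_of_neg_of_neg hnum (by linarith)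
  have hβrne : βr ≠ 0 := ne_of_gt hβrpos
  have hquad : A * βr^2 + B * βr + 2 = 0 := by
    rw [hβr]; field_simp; nlinarith [ht, (by rw [mul_comm A 8]; exact ht : Real.sqrt (B^2 - A*8) ^ 2 = B^2 - A*8)]
  -- stationarity
  set v : Fin k → ℝ :=
    fun j => 2 * S j.castSucc (Fin.last k) * βr + u j.castSucc - ρ * γ j.castSucc with hv
  set b : Fin k → ℝ := fun i => -(M⁻¹.mulVec v i) with hb
  have hβsc : ∀ i : Fin k, βstar i.castSucc = b i := by
    intro i; rw [hβstar]; simp [hb]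
  have hβsl : βstar (Fin.last k) = βr := by rw [hβstar]; simp
  have hMb : ∀ i, (M.mulVec b) i = -v i := by
    intro i
    have : M.mulVec b = -(M.mulVec (M⁻¹.mulVec v)) := by
      rw [← Matrix.mulVec_neg]
      congr 1
    rw [this, hMinv]
    simp
  have hMbexp : ∀ e : Fin k → ℝ, ∀ i, (M.mulVec e) i
      = 2 * (∑ j : Fin k, S i.castSucc j.castSucc * e j) + ρ * e i := by
    intro e i
    rw [hM]
    simp only [Matrix.mulVec, dotProduct, Matrix.add_apply, Matrix.smul_apply,
      Matrix.one_apply, smul_eq_mul, add_mul, ite_mul, zero_mul, Finset.sum_add_distrib,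
      Finset.sum_ite_eq, Finset.mem_univ, if_pos, Finset.mul_sum]
    refine congrArg₂ (· + ·) (Finset.sum_congr rfl fun j _ => by
      simp [Matrix.submatrix_apply]; ring) ?_
    simp [mul_ite, ite_mul, Finset.sum_ite_eq]
  set g : Fin (k+1) → ℝ :=
    fun i => 2 * (S.mulVec βstar) i + ρ * βstar i + u i - ρ * γ i with hg
  have hgc : ∀ i : Fin k, g i.castSucc = 0 := by
    intro i
    have h1 : (S.mulVec βstar) i.castSucc
        = (∑ j : Fin k, S i.castSucc j.castSucc * b j) + S i.castSucc (Fin.last k) * βr := by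
      rw [hβstar]
      have := mulVec_snoc' S
        (fun i : Fin k => -(M⁻¹.mulVec v i)) βr i.castSucc
      rw [this]
    have h2 := hMb i
    rw [hMbexp b i] at h2
    simp only [hg, h1, hβsc i]
    simp only [hv] at h2 ⊢
    linarith
  have hglast : g (Fin.last k) = 2 / βr := by
    have h1 : (S.mulVec βstar) (Fin.last k)
        = (∑ j : Fin k, S (Fin.last k) j.castSucc * b j)
          + S (Fin.last k) (Fin.last k) * βr := by
      rw [hβstar]
      exact mulVec_snoc' S (fun i : Fin k => -(M⁻¹.mulVec v i)) βr (Fin.last k)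
    set uγ : Fin k → ℝ := fun i => u i.castSucc - ρ * γ i.castSucc with huγ
    have harg : v = (2*βr) • w + uγ := by
      funext j
      simp only [hv, hw, huγ, Pi.add_apply, Pi.smul_apply, smul_eq_mul]
      ring
    have hvdec : M⁻¹.mulVec v = (2*βr) • M⁻¹.mulVec w + M⁻¹.mulVec uγ := by
      rw [harg, Matrix.mulVec_add, Matrix.mulVec_smul]
    have hbj : ∀ j, b j = -((2*βr) * (M⁻¹.mulVec w) j + (M⁻¹.mulVec uγ) j) := by
      intro j
      rw [hb]
      simp only [hvdec, Pi.add_apply, Pi.smul_apply, smul_eq_mul]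
    have h2 : ∑ j : Fin k, S (Fin.last k) j.castSucc * b j
        = -((2*βr) * dotProduct wr (M⁻¹.mulVec w)
            + dotProduct wr (M⁻¹.mulVec uγ)) := by
      simp only [dotProduct, hwr]
      rw [Finset.mul_sum, ← Finset.sum_add_distrib, ← Finset.sum_neg_distrib]
      refine Finset.sum_congr rfl fun j _ => ?_
      rw [hbj j]
      ring
    have hAq : 4 * dotProduct wr (M⁻¹.mulVec w)
        = A + 2 * S (Fin.last k) (Fin.last k) + ρ := by rw [hA]; ring
    have hBq : 2 * dotProduct wr (M⁻¹.mulVec uγ)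
        = B + u (Fin.last k) - ρ * γ (Fin.last k) := by rw [hB]; ring
    have hAB : -(A * βr + B) = 2 / βr := by
      rw [eq_div_iff hβrne]; linear_combination -hquad
    simp only [hg, h1, h2, hβsl]
    linear_combination (-βr) * hAq - hBq + hAB
  -- f in dot-product form
  have hXS : ∀ β : Fin (k+1) → ℝ, (1/(n:ℝ)) * ∑ i : Fin n, (X.mulVec β i)^2
      = dotProduct β (S.mulVec β) := by
    intro β
    rw [hS, Matrix.smul_mulVec, dotProduct_smul, ← Matrix.mulVec_mulVec,
      Matrix.dotProduct_mulVec, Matrix.vecMul_transpose]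
    simp [dotProduct, sq]
  have hfd : ∀ β : Fin (k+1) → ℝ, f β = -2 * Real.log (β (Fin.last k))
      + dotProduct β (S.mulVec β) + dotProduct (β - γ) u
      + (ρ/2) * dotProduct (β - γ) (β - γ) := by
    intro β
    rw [hf, hXS]
    simp [dotProduct, sq]
  -- dot product of (β - βstar) with g
  have hdg : ∀ β : Fin (k+1) → ℝ,
      dotProduct (β - βstar) g = (β (Fin.last k) - βr) * (2/βr) := by
    intro β
    simp only [dotProduct, Pi.sub_apply]
    rw [Fin.sum_univ_castSucc]
    simp only [hgc, hglast, mul_zero, Finset.sum_const_zero, zero_add, hβsl]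
  -- key decomposition
  have hkey : ∀ β : Fin (k+1) → ℝ, f β - f βstar =
      (-2 * Real.log (β (Fin.last k)) + 2 * Real.log βr + (β (Fin.last k) - βr) * (2/βr))
      + dotProduct (β - βstar) (S.mulVec (β - βstar))
      + (ρ/2) * dotProduct (β - βstar) (β - βstar) := by
    intro β
    rw [hfd β, hfd βstar, hβsl]
    have e1 : β = βstar + (β - βstar) := by abel
    have e2 : β - γ = (βstar - γ) + (β - βstar) := by abel
    rw [← hdg β]
    set d : Fin (k+1) → ℝ := β - βstar with hd
    have expS : dotProduct β (S.mulVec β)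
        = dotProduct βstar (S.mulVec βstar)
          + 2 * dotProduct d (S.mulVec βstar) + dotProduct d (S.mulVec d) := by
      conv_lhs => rw [e1]
      rw [Matrix.mulVec_add, dotProduct_add, add_dotProduct,
        add_dotProduct, hswap βstar d]
      ring
    have expU : dotProduct (β - γ) u
        = dotProduct (βstar - γ) u + dotProduct d u := by
      rw [e2, add_dotProduct]
    have expQ : dotProduct (β - γ) (β - γ)
        = dotProduct (βstar - γ) (βstar - γ)
          + 2 * dotProduct d (βstar - γ) + dotProduct d d := by
      rw [e2, dotProduct_add, add_dotProduct, add_dotProduct,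
        dotProduct_comm (βstar - γ) d]
      ring
    have expG : dotProduct d g
        = 2 * dotProduct d (S.mulVec βstar) + ρ * dotProduct d βstar
          + dotProduct d u - ρ * dotProduct d γ := by
      simp only [hg, dotProduct, Finset.mul_sum, ← Finset.sum_add_distrib,
        ← Finset.sum_sub_distrib]
      exact Finset.sum_congr rfl fun i _ => by ring
    have expDG : dotProduct d (βstar - γ)
        = dotProduct d βstar - dotProduct d γ := by
      rw [dotProduct_sub]
    rw [expS, expU, expQ, expG, expDG]
    ring
  -- nonnegativity of the log part
  have hlog : ∀ x : ℝ, 0 < x →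
      0 ≤ -2 * Real.log x + 2 * Real.log βr + (x - βr) * (2/βr) := by
    intro x hx
    have h := Real.log_le_sub_one_of_pos (div_pos hx hβrpos)
    rw [Real.log_div (ne_of_gt hx) hβrne] at h
    have h2 : (x - βr) * (2/βr) = 2 * (x/βr - 1) := by field_simp
    rw [h2]; linarith
  have hddnn : ∀ d : Fin (k+1) → ℝ, 0 ≤ dotProduct d d :=
    fun d => Finset.sum_nonneg fun i _ => mul_self_nonneg _
  refine ⟨hdet, hA0, hβrpos, ?_, ?_⟩
  · intro β hβ
    have hk0 := hkey β
    have h1 := hlog _ hβ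
    have h2 := hpsd (β - βstar)
    have h3 := hddnn (β - βstar)
    have h3' : 0 ≤ ρ/2 * dotProduct (β - βstar) (β - βstar) :=
      mul_nonneg (by linarith) h3
    linarith
  · intro β hβ hfe
    have hk0 := hkey β
    rw [hfe, sub_self] at hk0
    have h1 := hlog _ hβ
    have h2 := hpsd (β - βstar)
    have h3 := hddnn (β - βstar)
    have h5 : ρ/2 * dotProduct (β - βstar) (β - βstar) ≤ 0 := by linarith
    have h4 : dotProduct (β - βstar) (β - βstar) = 0 := by
      rcases lt_or_eq_of_le h3 with hlt | he
      · exfalso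
        have := mul_pos (show (0:ℝ) < ρ/2 by linarith) hlt
        linarith
      · exact he.symm
    funext i
    have h6 := (Finset.sum_eq_zero_iff_of_nonneg
      (fun i _ => mul_self_nonneg ((β - βstar) i))).mp h4 i (Finset.mem_univ i)
    have h7 : β i - βstar i = 0 := mul_self_eq_zero.mp h6
    linarith
end

section
/- Let r ≥ 2, y ∈ ℝ^r, τ > 0, and weights w_{ℓm} > 0 for 1 ≤ m ≤ ℓ ≤ r−1; write W^{(ℓ)} ∈ ℝ^r for the vector with m-th entry w_{ℓm} for m ≤ ℓ and 0 otherwise, g_ℓ = {1,…,ℓ}, and ∗ for the entrywise product. Consider the primal problem: minimize over γ ∈ ℝ^r the function (1/2)‖γ − y‖₂² + τ·Σ_{ℓ=1}^{r−1}(Σ_{m=1}^ℓ w_{ℓm}²γ_m²)^{1/2}, and the dual problem: minimize ‖y − τ·Σ_{ℓ=1}^{r−1} W^{(ℓ)}∗a^{(ℓ)}‖₂² over tuples (a^{(1)},…,a^{(r−1)}) with a^{(ℓ)} ∈ ℝ^r, ‖(a^{(ℓ)})_{g_ℓ}‖₂ ≤ 1, and (a^{(ℓ)})_m = 0 for m >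 ℓ. Then the dual problem attains its minimum, and for any dual minimizer (â^{(1)},…,â^{(r−1)}) the vector γ̂ = y − τ·Σ_{ℓ=1}^{r−1} W^{(ℓ)}∗â^{(ℓ)} is the unique minimizer of the primal problem. -/
open Finset


lemma csF {ι : Type*} (s : Finset ι) (f g : ι → ℝ) :
    ∑ i ∈ s, f i * g i ≤ Real.sqrt (∑ i ∈ s, f i ^ 2) * Real.sqrt (∑ i ∈ s, g i ^ 2) := by
  have h := Finset.sum_mul_sq_le_sq_mul_sq s f g
  calc ∑ i ∈ s, f i * g i ≤ |∑ i ∈ s, f i * g i| := le_abs_self _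
    _ = Real.sqrt ((∑ i ∈ s, f i * g i) ^ 2) := (Real.sqrt_sq_eq_abs _).symm
    _ ≤ Real.sqrt ((∑ i ∈ s, f i ^ 2) * ∑ i ∈ s, g i ^ 2) := Real.sqrt_le_sqrt h
    _ = _ := Real.sqrt_mul (Finset.sum_nonneg fun i _ => sq_nonneg _) _

lemma sqrtTri {ι : Type*} (s : Finset ι) (f g : ι → ℝ) :
    Real.sqrt (∑ i ∈ s, (f i + g i) ^ 2) ≤
      Real.sqrt (∑ i ∈ s, f i ^ 2) + Real.sqrt (∑ i ∈ s, g i ^ 2) := by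
  set A := Real.sqrt (∑ i ∈ s, f i ^ 2) with hA
  set B := Real.sqrt (∑ i ∈ s, g i ^ 2) with hB
  have hA0 : 0 ≤ A := Real.sqrt_nonneg _
  have hB0 : 0 ≤ B := Real.sqrt_nonneg _
  have hAs : A ^ 2 = ∑ i ∈ s, f i ^ 2 :=
    Real.sq_sqrt (Finset.sum_nonneg fun i _ => sq_nonneg _)
  have hBs : B ^ 2 = ∑ i ∈ s, g i ^ 2 :=
    Real.sq_sqrt (Finset.sum_nonneg fun i _ => sq_nonneg _)
  have key : ∑ i ∈ s, (f i + g i) ^ 2 ≤ (A + B) ^ 2 := by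
    have hcs := csF s f g
    have : ∑ i ∈ s, (f i + g i) ^ 2
        = ∑ i ∈ s, f i ^ 2 + 2 * ∑ i ∈ s, f i * g i + ∑ i ∈ s, g i ^ 2 := by
      simp only [Finset.mul_sum, ← Finset.sum_add_distrib]
      exact Finset.sum_congr rfl fun i _ => by ring
    rw [this]; nlinarith [hcs]
  calc Real.sqrt (∑ i ∈ s, (f i + g i) ^ 2) ≤ Real.sqrt ((A + B) ^ 2) := Real.sqrt_le_sqrt key
    _ = A + B := Real.sqrt_sq (by positivity)

lemma sqrtSmul {ι : Type*} (s : Finset ι) (c : ℝ) (f : ι → ℝ) :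
    Real.sqrt (∑ i ∈ s, (c * f i) ^ 2) = |c| * Real.sqrt (∑ i ∈ s, f i ^ 2) := by
  rw [← Real.sqrt_sq_eq_abs, ← Real.sqrt_mul (sq_nonneg c), Finset.mul_sum]
  congr 1
  exact Finset.sum_congr rfl fun i _ => by ring


/-- Primal/dual pair for the proximal operator of the hierarchical group
lasso penalty.  Coordinates of `ℝ^r` are 0-based: group `g_{ℓ+1}` of the paper is
`{m : (m:ℕ) ≤ ℓ}` for `ℓ ∈ {0,…,r−2}`, and `w ℓ m` is the (0-based) weight `w_{ℓ+1,m+1}`.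
The dual problem attains its minimum, and for any dual minimizer `â`, the vector
`γ̂ = y − τ Σ_ℓ W^{(ℓ)} ∗ â^{(ℓ)}` is the unique minimizer of the primal problem
`γ ↦ (1/2)‖γ − y‖₂² + τ Σ_ℓ (Σ_{m ≤ ℓ} w_{ℓm}² γ_m²)^{1/2}`. -/
theorem stmt_4 (r : ℕ) (hr : 2 ≤ r) (y : Fin r → ℝ) (τ : ℝ) (hτ : 0 < τ)
    (w : ℕ → ℕ → ℝ) (hw : ∀ ℓ m : ℕ, m ≤ ℓ → ℓ < r - 1 → 0 < w ℓ m)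
    (Wv : ℕ → Fin r → ℝ)
    (hWv : ∀ (ℓ : ℕ) (m : Fin r), Wv ℓ m = if (m : ℕ) ≤ ℓ then w ℓ (m : ℕ) else 0)
    (Pobj : (Fin r → ℝ) → ℝ)
    (hP : ∀ γ : Fin r → ℝ, Pobj γ =
      (1 / 2) * ∑ j : Fin r, (γ j - y j) ^ 2
        + τ * ∑ ℓ ∈ Finset.range (r - 1),
            Real.sqrt (∑ m ∈ Finset.univ.filter (fun m : Fin r => (m : ℕ) ≤ ℓ),
              w ℓ (m : ℕ) ^ 2 * γ m ^ 2))
    (Dfeas : (ℕ → Fin r → ℝ) → Prop)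
    (hD : ∀ a : ℕ → Fin r → ℝ, Dfeas a ↔
      ∀ ℓ, ℓ < r - 1 →
        (Real.sqrt (∑ m ∈ Finset.univ.filter (fun m : Fin r => (m : ℕ) ≤ ℓ), a ℓ m ^ 2) ≤ 1
          ∧ ∀ m : Fin r, ℓ < (m : ℕ) → a ℓ m = 0))
    (G : (ℕ → Fin r → ℝ) → ℝ)
    (hG : ∀ a : ℕ → Fin r → ℝ, G a =
      ∑ j : Fin r, (y j - τ * ∑ ℓ ∈ Finset.range (r - 1), Wv ℓ j * a ℓ j) ^ 2) :
    (∃ ahat : ℕ → Fin r → ℝ, Dfeas ahat ∧ ∀ a, Dfeas a → G ahat ≤ G a) ∧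
    (∀ ahat : ℕ → Fin r → ℝ, Dfeas ahat → (∀ a, Dfeas a → G ahat ≤ G a) →
      (∀ γ : Fin r → ℝ,
        Pobj (fun j => y j - τ * ∑ ℓ ∈ Finset.range (r - 1), Wv ℓ j * ahat ℓ j) ≤ Pobj γ) ∧
      (∀ γ : Fin r → ℝ,
        Pobj γ ≤ Pobj (fun j => y j - τ * ∑ ℓ ∈ Finset.range (r - 1), Wv ℓ j * ahat ℓ j) →
        γ = fun j => y j - τ * ∑ ℓ ∈ Finset.range (r - 1), Wv ℓ j * ahat ℓ j)) := by
  constructor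
  · set n := r - 1 with hn
    set F : (Fin n → Fin r → ℝ) → ℝ := fun b =>
      ∑ j : Fin r, (y j - τ * ∑ ℓ : Fin n, Wv ℓ j * b ℓ j) ^ 2 with hF
    have hGF : ∀ a : ℕ → Fin r → ℝ, G a = F (fun ℓ : Fin n => a ℓ) := by
      intro a
      rw [hG a]
      simp only [hF, Finset.sum_range]
    set S : Set (Fin n → Fin r → ℝ) := {b | ∀ ℓ : Fin n,
      (∑ m ∈ Finset.univ.filter (fun m : Fin r => (m : ℕ) ≤ (ℓ : ℕ)), b ℓ m ^ 2) ≤ 1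
        ∧ ∀ m : Fin r, (ℓ : ℕ) < (m : ℕ) → b ℓ m = 0} with hS
    have hS0 : (0 : Fin n → Fin r → ℝ) ∈ S := by
      intro ℓ
      constructor
      · simp
      · intro m _; rfl
    have hclosed : IsClosed S := by
      have : S = ⋂ ℓ : Fin n,
          ({b : Fin n → Fin r → ℝ |
              (∑ m ∈ Finset.univ.filter (fun m : Fin r => (m : ℕ) ≤ (ℓ : ℕ)), b ℓ m ^ 2) ≤ 1}
            ∩ ⋂ m : Fin r, ⋂ (_ : (ℓ : ℕ) < (m : ℕ)), {b : Fin n → Fin r → ℝ | b ℓ m = 0}) := by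
        ext b
        simp [hS, Set.mem_iInter]
      rw [this]
      refine isClosed_iInter fun ℓ => IsClosed.inter ?_ ?_
      · exact isClosed_le (continuous_finset_sum _ fun m _ =>
          ((continuous_apply m).comp (continuous_apply ℓ)).pow 2) continuous_const
      · exact isClosed_iInter fun m => isClosed_iInter fun _ =>
          isClosed_eq ((continuous_apply m).comp (continuous_apply ℓ)) continuous_const
    have hbdd : Bornology.IsBounded S := by
      refine (Metric.isBounded_closedBall (x := (0 : Fin n → Fin r → ℝ)) (r := 1)).subset ?_
      intro b hb
      rw [Metric.mem_closedBall, dist_zero_right]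
      rw [pi_norm_le_iff_of_nonneg zero_le_one]
      intro ℓ
      rw [pi_norm_le_iff_of_nonneg zero_le_one]
      intro m
      rw [Real.norm_eq_abs]
      by_cases hm : (m : ℕ) ≤ (ℓ : ℕ)
      · have h1 : b ℓ m ^ 2 ≤ ∑ m' ∈ Finset.univ.filter (fun m' : Fin r => (m' : ℕ) ≤ (ℓ : ℕ)),
            b ℓ m' ^ 2 :=
          Finset.single_le_sum (f := fun m' : Fin r => b ℓ m' ^ 2) (fun i _ => sq_nonneg _)
            (Finset.mem_filter.mpr ⟨Finset.mem_univ m, hm⟩)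
        have h2 := (hb ℓ).1
        calc |b ℓ m| = Real.sqrt (b ℓ m ^ 2) := (Real.sqrt_sq_eq_abs _).symm
          _ ≤ Real.sqrt 1 := Real.sqrt_le_sqrt (le_trans h1 h2)
          _ = 1 := Real.sqrt_one
      · rw [(hb ℓ).2 m (not_le.mp hm)]; simp
    have hcompact : IsCompact S := Metric.isCompact_of_isClosed_isBounded hclosed hbdd
    have hFcont : Continuous F := by
      apply continuous_finset_sum
      intro j _
      apply Continuous.pow
      apply Continuous.sub continuous_const
      apply Continuous.mul continuous_const
      apply continuous_finset_sum
      intro ℓ _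
      exact Continuous.mul continuous_const ((continuous_apply j).comp (continuous_apply ℓ))
    obtain ⟨b0, hb0S, hb0min⟩ := hcompact.exists_isMinOn ⟨0, hS0⟩ hFcont.continuousOn
    refine ⟨fun ℓ => if h : ℓ < n then b0 ⟨ℓ, h⟩ else 0, ?_, ?_⟩
    · rw [hD]
      intro ℓ hℓ
      simp only [dif_pos hℓ]
      obtain ⟨h1, h2⟩ := hb0S ⟨ℓ, hℓ⟩
      exact ⟨Real.sqrt_le_one.mpr h1, h2⟩
    · intro a ha
      have hres : (fun ℓ : Fin n => a ℓ) ∈ S := by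
        intro ℓ
        obtain ⟨h1, h2⟩ := (hD a).mp ha ℓ ℓ.isLt
        refine ⟨?_, h2⟩
        have hnn : 0 ≤ ∑ m ∈ Finset.univ.filter (fun m : Fin r => (m : ℕ) ≤ (ℓ : ℕ)), a ℓ m ^ 2 :=
          Finset.sum_nonneg fun i _ => sq_nonneg _
        nlinarith [Real.sq_sqrt hnn, Real.sqrt_nonneg
          (∑ m ∈ Finset.univ.filter (fun m : Fin r => (m : ℕ) ≤ (ℓ : ℕ)), a ℓ m ^ 2)]
      have heq : (fun ℓ : Fin n => (fun ℓ' => if h : ℓ' < n then b0 ⟨ℓ', h⟩ else 0) (ℓ : ℕ)) = b0 := by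
        funext ℓ
        simp [ℓ.isLt]
      calc G (fun ℓ => if h : ℓ < n then b0 ⟨ℓ, h⟩ else 0)
          = F b0 := by rw [hGF]; rw [heq]
        _ ≤ F (fun ℓ : Fin n => a ℓ) := hb0min hres
        _ = G a := (hGF a).symm
  · intro ahat hfeas hmin
    set n := r - 1 with hn
    set γh : Fin r → ℝ := fun j => y j - τ * ∑ ℓ ∈ Finset.range n, Wv ℓ j * ahat ℓ j with hγh
    have hfeas' := (hD ahat).mp hfeas
    have hWz : ∀ (ℓ : ℕ) (j : Fin r), ¬((j : ℕ) ≤ ℓ) → Wv ℓ j = 0 := fun ℓ j h => by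
      rw [hWv]; exact if_neg h
    -- restrict full sums to the filter
    have hrestrict : ∀ (ℓ : ℕ) (f : Fin r → ℝ), (∀ j : Fin r, ¬((j : ℕ) ≤ ℓ) → f j = 0) →
        ∑ j ∈ Finset.univ.filter (fun m : Fin r => (m : ℕ) ≤ ℓ), f j = ∑ j : Fin r, f j := by
      intro ℓ f h
      exact Finset.sum_filter_of_ne fun x _ hx => not_not.mp fun hc => hx (h x hc)
    -- Variational inequality
    have hVI : ∀ a, Dfeas a →
        ∑ j : Fin r, γh j * (τ * ∑ ℓ ∈ Finset.range n, Wv ℓ j * (a ℓ j - ahat ℓ j)) ≤ 0 := by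
      intro a ha
      set d : Fin r → ℝ := fun j => τ * ∑ ℓ ∈ Finset.range n, Wv ℓ j * (a ℓ j - ahat ℓ j) with hd
      have key : ∀ t : ℝ, 0 < t → t ≤ 1 →
          2 * t * (∑ j : Fin r, γh j * d j) ≤ t ^ 2 * (∑ j : Fin r, d j ^ 2) := by
        intro t ht0 ht1
        set a' : ℕ → Fin r → ℝ := fun ℓ m => ahat ℓ m + t * (a ℓ m - ahat ℓ m) with ha'
        have ha'feas : Dfeas a' := by
          rw [hD]
          intro ℓ hℓ
          obtain ⟨h1, h2⟩ := (hD a).mp ha ℓ hℓ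
          obtain ⟨h1', h2'⟩ := hfeas' ℓ hℓ
          constructor
          · have heq : ∀ m : Fin r, a' ℓ m = (1 - t) * ahat ℓ m + t * a ℓ m := fun m => by
              simp only [ha']; ring
            calc Real.sqrt (∑ m ∈ Finset.univ.filter (fun m : Fin r => (m : ℕ) ≤ ℓ), a' ℓ m ^ 2)
                = Real.sqrt (∑ m ∈ Finset.univ.filter (fun m : Fin r => (m : ℕ) ≤ ℓ),
                    ((1 - t) * ahat ℓ m + t * a ℓ m) ^ 2) := by
                  congr 1; exact Finset.sum_congr rfl fun m _ => by rw [heq]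
              _ ≤ Real.sqrt (∑ m ∈ Finset.univ.filter (fun m : Fin r => (m : ℕ) ≤ ℓ),
                    ((1 - t) * ahat ℓ m) ^ 2)
                  + Real.sqrt (∑ m ∈ Finset.univ.filter (fun m : Fin r => (m : ℕ) ≤ ℓ),
                    (t * a ℓ m) ^ 2) := sqrtTri _ _ _
              _ = |1 - t| * Real.sqrt (∑ m ∈ Finset.univ.filter (fun m : Fin r => (m : ℕ) ≤ ℓ),
                    ahat ℓ m ^ 2)
                  + |t| * Real.sqrt (∑ m ∈ Finset.univ.filter (fun m : Fin r => (m : ℕ) ≤ ℓ),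
                    a ℓ m ^ 2) := by rw [sqrtSmul, sqrtSmul]
              _ ≤ (1 - t) * 1 + t * 1 := by
                  rw [abs_of_nonneg (by linarith : (0:ℝ) ≤ 1 - t), abs_of_nonneg ht0.le]
                  have e1 := mul_le_mul_of_nonneg_left h1' (by linarith : (0:ℝ) ≤ 1 - t)
                  have e2 := mul_le_mul_of_nonneg_left h1 ht0.le
                  linarith
              _ = 1 := by ring
          · intro m hm
            simp only [ha', h2 m hm, h2' m hm]; ring
        have hle := hmin a' ha'feas
        rw [hG, hG] at hle
        have hG2 : ∀ j : Fin r, y j - τ * ∑ ℓ ∈ Finset.range n, Wv ℓ j * a' ℓ j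
            = γh j - t * d j := by
          intro j
          have hsum : ∑ ℓ ∈ Finset.range n, Wv ℓ j * a' ℓ j
              = ∑ ℓ ∈ Finset.range n, Wv ℓ j * ahat ℓ j
                + t * ∑ ℓ ∈ Finset.range n, Wv ℓ j * (a ℓ j - ahat ℓ j) := by
            rw [Finset.mul_sum, ← Finset.sum_add_distrib]
            exact Finset.sum_congr rfl fun ℓ _ => by simp only [ha']; ring
          simp only [hγh, hd, hsum]; ring
        have hG1 : ∀ j : Fin r, y j - τ * ∑ ℓ ∈ Finset.range n, Wv ℓ j * ahat ℓ j = γh j :=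
          fun j => rfl
        have hrw1 : ∑ j : Fin r, (y j - τ * ∑ ℓ ∈ Finset.range n, Wv ℓ j * ahat ℓ j) ^ 2
            = ∑ j : Fin r, γh j ^ 2 := Finset.sum_congr rfl fun j _ => by rw [hG1 j]
        have hrw2 : ∑ j : Fin r, (y j - τ * ∑ ℓ ∈ Finset.range n, Wv ℓ j * a' ℓ j) ^ 2
            = ∑ j : Fin r, (γh j - t * d j) ^ 2 := Finset.sum_congr rfl fun j _ => by rw [hG2 j]
        rw [hrw2] at hle
        have hexp : ∑ j : Fin r, (γh j - t * d j) ^ 2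
            = ∑ j : Fin r, γh j ^ 2 - 2 * t * ∑ j : Fin r, γh j * d j
              + t ^ 2 * ∑ j : Fin r, d j ^ 2 := by
          simp only [Finset.mul_sum, ← Finset.sum_sub_distrib, ← Finset.sum_add_distrib]
          exact Finset.sum_congr rfl fun j _ => by ring
        rw [hexp] at hle
        linarith
      -- conclude from key
      set c := ∑ j : Fin r, γh j * d j with hc
      set M := ∑ j : Fin r, d j ^ 2 with hM
      by_contra hcpos
      push_neg at hcpos
      have hM0 : 0 ≤ M := Finset.sum_nonneg fun j _ => sq_nonneg _
      rcases eq_or_lt_of_le hM0 with hM1 | hM1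
      · have := key 1 one_pos le_rfl
        rw [← hM1] at this
        nlinarith
      · set t := min 1 (c / M) with ht
        have ht0 : 0 < t := lt_min one_pos (div_pos hcpos hM1)
        have ht1 : t ≤ 1 := min_le_left _ _
        have htc : t ≤ c / M := min_le_right _ _
        have := key t ht0 ht1
        have h2 : t * M ≤ c := by
          rw [← le_div_iff₀ hM1] at *; exact htc
        nlinarith
    -- Cauchy-Schwarz bound
    have hCS : ∀ ℓ, ℓ < n → ∀ γ : Fin r → ℝ,
        ∑ j : Fin r, Wv ℓ j * ahat ℓ j * γ j ≤
          Real.sqrt (∑ m ∈ Finset.univ.filter (fun m : Fin r => (m : ℕ) ≤ ℓ),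
            w ℓ (m : ℕ) ^ 2 * γ m ^ 2) := by
      intro ℓ hℓ γ
      obtain ⟨h1', -⟩ := hfeas' ℓ hℓ
      rw [← hrestrict ℓ (fun j => Wv ℓ j * ahat ℓ j * γ j)
        (fun j hj => by simp only [hWz ℓ j hj]; ring)]
      have hre : ∑ j ∈ Finset.univ.filter (fun m : Fin r => (m : ℕ) ≤ ℓ), Wv ℓ j * ahat ℓ j * γ j
          = ∑ j ∈ Finset.univ.filter (fun m : Fin r => (m : ℕ) ≤ ℓ),
              ahat ℓ j * (w ℓ (j : ℕ) * γ j) := by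
        refine Finset.sum_congr rfl fun m hm => ?_
        obtain ⟨-, hm'⟩ := Finset.mem_filter.mp hm
        rw [hWv, if_pos hm']; ring
      rw [hre]
      calc ∑ j ∈ Finset.univ.filter (fun m : Fin r => (m : ℕ) ≤ ℓ), ahat ℓ j * (w ℓ (j : ℕ) * γ j)
          ≤ Real.sqrt (∑ j ∈ Finset.univ.filter (fun m : Fin r => (m : ℕ) ≤ ℓ), ahat ℓ j ^ 2)
            * Real.sqrt (∑ j ∈ Finset.univ.filter (fun m : Fin r => (m : ℕ) ≤ ℓ),
                (w ℓ (j : ℕ) * γ j) ^ 2) := csF _ _ _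
        _ ≤ 1 * Real.sqrt (∑ j ∈ Finset.univ.filter (fun m : Fin r => (m : ℕ) ≤ ℓ),
                (w ℓ (j : ℕ) * γ j) ^ 2) :=
            mul_le_mul_of_nonneg_right h1' (Real.sqrt_nonneg _)
        _ = _ := by
            rw [one_mul]; congr 1; exact Finset.sum_congr rfl fun m _ => by ring
    -- equality at the minimizer
    have hEq : ∀ ℓ, ℓ < n →
        ∑ j : Fin r, Wv ℓ j * ahat ℓ j * γh j =
          Real.sqrt (∑ m ∈ Finset.univ.filter (fun m : Fin r => (m : ℕ) ≤ ℓ),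
            w ℓ (m : ℕ) ^ 2 * γh m ^ 2) := by
      intro ℓ hℓ
      refine le_antisymm (hCS ℓ hℓ γh) ?_
      set s0 := Real.sqrt (∑ m ∈ Finset.univ.filter (fun m : Fin r => (m : ℕ) ≤ ℓ),
        w ℓ (m : ℕ) ^ 2 * γh m ^ 2) with hs0
      have hs0nn : 0 ≤ s0 := Real.sqrt_nonneg _
      have hsum_nn : 0 ≤ ∑ m ∈ Finset.univ.filter (fun m : Fin r => (m : ℕ) ≤ ℓ),
          w ℓ (m : ℕ) ^ 2 * γh m ^ 2 :=
        Finset.sum_nonneg fun m _ => mul_nonneg (sq_nonneg _) (sq_nonneg _)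
      rcases eq_or_lt_of_le hs0nn with h0 | h0
      · -- s0 = 0
        rw [← h0]
        have hSz : ∑ m ∈ Finset.univ.filter (fun m : Fin r => (m : ℕ) ≤ ℓ),
            w ℓ (m : ℕ) ^ 2 * γh m ^ 2 = 0 := by
          have hle0 : ∑ m ∈ Finset.univ.filter (fun m : Fin r => (m : ℕ) ≤ ℓ),
              w ℓ (m : ℕ) ^ 2 * γh m ^ 2 ≤ 0 := Real.sqrt_eq_zero'.mp h0.symm
          exact le_antisymm hle0 hsum_nn
        have hz : ∑ j : Fin r, Wv ℓ j * ahat ℓ j * γh j = 0 := by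
          rw [← hrestrict ℓ (fun j => Wv ℓ j * ahat ℓ j * γh j)
            (fun j hj => by simp only [hWz ℓ j hj]; ring)]
          apply Finset.sum_eq_zero
          intro m hm
          obtain ⟨-, hm'⟩ := Finset.mem_filter.mp hm
          have hterm : w ℓ (m : ℕ) ^ 2 * γh m ^ 2 = 0 :=
            (Finset.sum_eq_zero_iff_of_nonneg
              (fun i _ => mul_nonneg (sq_nonneg _) (sq_nonneg _))).mp hSz m hm
          have hwpos : 0 < w ℓ (m : ℕ) := hw ℓ (m : ℕ) hm' hℓ
          have hγ : γh m = 0 := by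
            rcases mul_eq_zero.mp hterm with h | h
            · exact absurd h (pow_ne_zero 2 hwpos.ne')
            · exact pow_eq_zero_iff two_ne_zero |>.mp h
          rw [hγ]; ring
        rw [hz]
      · -- s0 > 0
        set a' : ℕ → Fin r → ℝ := fun ℓ' m =>
          if ℓ' = ℓ then (if (m : ℕ) ≤ ℓ then w ℓ (m : ℕ) * γh m / s0 else 0) else ahat ℓ' m
          with ha'
        have hs0sq : s0 ^ 2 = ∑ m ∈ Finset.univ.filter (fun m : Fin r => (m : ℕ) ≤ ℓ),
            w ℓ (m : ℕ) ^ 2 * γh m ^ 2 := Real.sq_sqrt hsum_nn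
        have ha'feas : Dfeas a' := by
          rw [hD]
          intro ℓ' hℓ'
          by_cases hh : ℓ' = ℓ
          · subst hh
            constructor
            · have hone : ∑ m ∈ Finset.univ.filter (fun m : Fin r => (m : ℕ) ≤ ℓ'),
                  a' ℓ' m ^ 2 = 1 := by
                have hterm : ∀ m ∈ Finset.univ.filter (fun m : Fin r => (m : ℕ) ≤ ℓ'),
                    a' ℓ' m ^ 2 = w ℓ' (m : ℕ) ^ 2 * γh m ^ 2 / s0 ^ 2 := by
                  intro m hm
                  obtain ⟨-, hm'⟩ := Finset.mem_filter.mp hm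
                  simp only [ha', if_pos rfl, if_pos hm']
                  ring
                rw [Finset.sum_congr rfl hterm, ← Finset.sum_div, ← hs0sq]
                field_simp
              rw [hone, Real.sqrt_one]
            · intro m hm
              simp only [ha', if_pos rfl, if_neg (not_le.mpr hm)]
          · constructor
            · have : ∀ m ∈ Finset.univ.filter (fun m : Fin r => (m : ℕ) ≤ ℓ'),
                  a' ℓ' m ^ 2 = ahat ℓ' m ^ 2 := fun m _ => by simp only [ha', if_neg hh]
              rw [Finset.sum_congr rfl this]
              exact (hfeas' ℓ' hℓ').1
            · intro m hm
              simp only [ha', if_neg hh]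
              exact (hfeas' ℓ' hℓ').2 m hm
        have hvi := hVI a' ha'feas
        have hsingle : ∀ j : Fin r, ∑ ℓ' ∈ Finset.range n, Wv ℓ' j * (a' ℓ' j - ahat ℓ' j)
            = Wv ℓ j * (a' ℓ j - ahat ℓ j) := by
          intro j
          apply Finset.sum_eq_single_of_mem ℓ (Finset.mem_range.mpr hℓ)
          intro b _ hb
          simp only [ha', if_neg hb]; ring
        have hvi' : ∑ j : Fin r, γh j * (τ * (Wv ℓ j * (a' ℓ j - ahat ℓ j))) ≤ 0 := by
          calc ∑ j : Fin r, γh j * (τ * (Wv ℓ j * (a' ℓ j - ahat ℓ j)))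
              = ∑ j : Fin r, γh j * (τ * ∑ ℓ' ∈ Finset.range n, Wv ℓ' j * (a' ℓ' j - ahat ℓ' j)) :=
                Finset.sum_congr rfl fun j _ => by rw [hsingle j]
            _ ≤ 0 := hvi
        have hsplit : ∑ j : Fin r, γh j * (τ * (Wv ℓ j * (a' ℓ j - ahat ℓ j)))
            = τ * (∑ j : Fin r, Wv ℓ j * a' ℓ j * γh j
                - ∑ j : Fin r, Wv ℓ j * ahat ℓ j * γh j) := by
          rw [← Finset.sum_sub_distrib, Finset.mul_sum]
          exact Finset.sum_congr rfl fun j _ => by ring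
        rw [hsplit] at hvi'
        have hdiff : ∑ j : Fin r, Wv ℓ j * a' ℓ j * γh j
            ≤ ∑ j : Fin r, Wv ℓ j * ahat ℓ j * γh j := by nlinarith
        have hlhs : ∑ j : Fin r, Wv ℓ j * a' ℓ j * γh j = s0 := by
          rw [← hrestrict ℓ (fun j => Wv ℓ j * a' ℓ j * γh j)
            (fun j hj => by simp only [hWz ℓ j hj]; ring)]
          have hterm : ∀ m ∈ Finset.univ.filter (fun m : Fin r => (m : ℕ) ≤ ℓ),
              Wv ℓ m * a' ℓ m * γh m = w ℓ (m : ℕ) ^ 2 * γh m ^ 2 / s0 := by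
            intro m hm
            obtain ⟨-, hm'⟩ := Finset.mem_filter.mp hm
            rw [hWv, if_pos hm']
            simp only [ha', if_pos rfl, if_pos hm']
            ring
          rw [Finset.sum_congr rfl hterm, ← Finset.sum_div, ← hs0sq]
          rw [pow_two, mul_div_assoc, div_self h0.ne', mul_one]
        linarith
    -- key inequality
    have key : ∀ γ : Fin r → ℝ, Pobj γh + (1/2) * ∑ j : Fin r, (γ j - γh j) ^ 2 ≤ Pobj γ := by
      intro γ
      rw [hP γ, hP γh]
      have hsq : ∑ j : Fin r, (γ j - y j) ^ 2 = ∑ j : Fin r, (γ j - γh j) ^ 2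
          + 2 * ∑ j : Fin r, (γ j - γh j) * (γh j - y j) + ∑ j : Fin r, (γh j - y j) ^ 2 := by
        simp only [Finset.mul_sum, ← Finset.sum_add_distrib]
        exact Finset.sum_congr rfl fun j _ => by ring
      have hyj : ∀ j : Fin r, γh j - y j
          = -(τ * ∑ ℓ ∈ Finset.range n, Wv ℓ j * ahat ℓ j) := fun j => by
        simp only [hγh]; ring
      have hcross : ∑ j : Fin r, (γ j - γh j) * (γh j - y j)
          = τ * (∑ ℓ ∈ Finset.range n, ∑ j : Fin r, Wv ℓ j * ahat ℓ j * γh j)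
            - τ * (∑ ℓ ∈ Finset.range n, ∑ j : Fin r, Wv ℓ j * ahat ℓ j * γ j) := by
        have hper : ∀ j : Fin r, (γ j - γh j) * (γh j - y j)
            = τ * ∑ ℓ ∈ Finset.range n,
                (Wv ℓ j * ahat ℓ j * γh j - Wv ℓ j * ahat ℓ j * γ j) := by
          intro j
          rw [hyj j, Finset.sum_sub_distrib, ← Finset.sum_mul, ← Finset.sum_mul]
          ring
        calc ∑ j : Fin r, (γ j - γh j) * (γh j - y j)
            = ∑ j : Fin r, τ * ∑ ℓ ∈ Finset.range n,
                (Wv ℓ j * ahat ℓ j * γh j - Wv ℓ j * ahat ℓ j * γ j) :=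
              Finset.sum_congr rfl fun j _ => hper j
          _ = τ * ∑ j : Fin r, ∑ ℓ ∈ Finset.range n,
                (Wv ℓ j * ahat ℓ j * γh j - Wv ℓ j * ahat ℓ j * γ j) := by
              rw [← Finset.mul_sum]
          _ = τ * ∑ ℓ ∈ Finset.range n, ∑ j : Fin r,
                (Wv ℓ j * ahat ℓ j * γh j - Wv ℓ j * ahat ℓ j * γ j) := by
              rw [Finset.sum_comm]
          _ = τ * ∑ ℓ ∈ Finset.range n, (∑ j : Fin r, Wv ℓ j * ahat ℓ j * γh j
                - ∑ j : Fin r, Wv ℓ j * ahat ℓ j * γ j) := by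
              rw [Finset.sum_congr rfl fun ℓ _ => Finset.sum_sub_distrib _ _]
          _ = _ := by rw [Finset.sum_sub_distrib]; ring
      have hEeq : ∑ ℓ ∈ Finset.range n, ∑ j : Fin r, Wv ℓ j * ahat ℓ j * γh j
          = ∑ ℓ ∈ Finset.range n,
              Real.sqrt (∑ m ∈ Finset.univ.filter (fun m : Fin r => (m : ℕ) ≤ ℓ),
                w ℓ (m : ℕ) ^ 2 * γh m ^ 2) :=
        Finset.sum_congr rfl fun ℓ hℓ => hEq ℓ (Finset.mem_range.mp hℓ)
      have hFle : τ * ∑ ℓ ∈ Finset.range n, ∑ j : Fin r, Wv ℓ j * ahat ℓ j * γ j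
          ≤ τ * ∑ ℓ ∈ Finset.range n,
              Real.sqrt (∑ m ∈ Finset.univ.filter (fun m : Fin r => (m : ℕ) ≤ ℓ),
                w ℓ (m : ℕ) ^ 2 * γ m ^ 2) :=
        mul_le_mul_of_nonneg_left
          (Finset.sum_le_sum fun ℓ hℓ => hCS ℓ (Finset.mem_range.mp hℓ) γ) hτ.le
      rw [hEeq] at hcross
      linarith
    constructor
    · intro γ
      have hk := key γ
      have hnn : 0 ≤ ∑ j : Fin r, (γ j - γh j) ^ 2 :=
        Finset.sum_nonneg fun j _ => sq_nonneg _
      linarith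
    · intro γ hγ
      have hk := key γ
      have hnn : 0 ≤ ∑ j : Fin r, (γ j - γh j) ^ 2 :=
        Finset.sum_nonneg fun j _ => sq_nonneg _
      have hz : ∑ j : Fin r, (γ j - γh j) ^ 2 = 0 := le_antisymm (by linarith) hnn
      funext j
      have h1 := (Finset.sum_eq_zero_iff_of_nonneg
        (fun j _ => sq_nonneg (γ j - γh j))).mp hz j (Finset.mem_univ j)
      exact sub_eq_zero.mp (pow_eq_zero_iff two_ne_zero |>.mp h1)
end

section
/- Let ℓ ≥ 1, z ∈ ℝ^ℓ, τ > 0, and let D = diag(w_1,…,w_ℓ) with all w_m > 0. Consider the problem of minimizing ‖z − τDa‖₂² over a ∈ ℝ^ℓ with ‖a‖₂ ≤ 1. (i) If ‖D^{−1}z‖₂ ≤ τ, then the minimizer is â = τ^{−1}D^{−1}z. (ii) If ‖D^{−1}z‖₂ > τ, then there is a unique ν̂ > 0 satisfying Σ_{m=1}^ℓ w_m² z_m²/(w_m² + ν̂)² = τ²; the minimizer is given by â_m = w_m z_m/(τ(w_m² + ν̂)) for each m, it satisfies ‖â‖₂ = 1, and ν̂ obeys the bounds [‖Dz‖₂/τ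 − max_m w_m²]_+ ≤ ν̂ ≤ ‖Dz‖₂/τ, where [x]_+ = max(x,0). -/
set_option maxHeartbeats 1000000 in
/-- elliptical projection.  Minimize `‖z − τ D a‖₂²` over `‖a‖₂ ≤ 1` with
`D = diag(w₁,…,w_ℓ)`, `w_m > 0`, `τ > 0`.
(i) If `‖D⁻¹z‖₂ ≤ τ` the minimizer is `â = τ⁻¹D⁻¹z`.
(ii) If `‖D⁻¹z‖₂ > τ` there is a unique `ν̂ > 0` with `Σ_m w_m²z_m²/(w_m²+ν̂)² = τ²`; the
minimizer is `â_m = w_m z_m/(τ(w_m²+ν̂))`, it has `‖â‖₂ = 1`, and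
`[‖Dz‖₂/τ − max_m w_m²]₊ ≤ ν̂ ≤ ‖Dz‖₂/τ`. -/
theorem stmt_6 (l : ℕ) (hl : 1 ≤ l) (z : Fin l → ℝ) (τ : ℝ) (hτ : 0 < τ)
    (w : Fin l → ℝ) (hw : ∀ m : Fin l, 0 < w m) :
    ((Real.sqrt (∑ m : Fin l, (z m / w m) ^ 2) ≤ τ) →
      (Real.sqrt (∑ m : Fin l, (z m / (τ * w m)) ^ 2) ≤ 1 ∧
       ∀ a : Fin l → ℝ, Real.sqrt (∑ m : Fin l, a m ^ 2) ≤ 1 →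
         ∑ m : Fin l, (z m - τ * w m * (z m / (τ * w m))) ^ 2
           ≤ ∑ m : Fin l, (z m - τ * w m * a m) ^ 2)) ∧
    ((τ < Real.sqrt (∑ m : Fin l, (z m / w m) ^ 2)) →
      ∃ ν : ℝ, 0 < ν ∧
        (∑ m : Fin l, w m ^ 2 * z m ^ 2 / (w m ^ 2 + ν) ^ 2 = τ ^ 2) ∧
        (∀ ν' : ℝ, 0 < ν' →
          (∑ m : Fin l, w m ^ 2 * z m ^ 2 / (w m ^ 2 + ν') ^ 2 = τ ^ 2) → ν' = ν) ∧
        (Real.sqrt (∑ m : Fin l, (w m * z m / (τ * (w m ^ 2 + ν))) ^ 2) = 1) ∧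
        (∀ a : Fin l → ℝ, Real.sqrt (∑ m : Fin l, a m ^ 2) ≤ 1 →
          ∑ m : Fin l, (z m - τ * w m * (w m * z m / (τ * (w m ^ 2 + ν)))) ^ 2
            ≤ ∑ m : Fin l, (z m - τ * w m * a m) ^ 2) ∧
        max (Real.sqrt (∑ m : Fin l, (w m * z m) ^ 2) / τ
              - Finset.univ.sup' ⟨⟨0, hl⟩, Finset.mem_univ _⟩ (fun m : Fin l => w m ^ 2)) 0
          ≤ ν ∧
        ν ≤ Real.sqrt (∑ m : Fin l, (w m * z m) ^ 2) / τ) := by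
  have hwne : ∀ m : Fin l, w m ≠ 0 := fun m => (hw m).ne'
  constructor
  · -- Part (i)
    intro h
    constructor
    · have hrw : ∀ m ∈ Finset.univ, (z m / (τ * w m)) ^ 2 = (z m / w m) ^ 2 / τ ^ 2 := by
        intro m _
        rw [div_pow, div_pow, mul_pow, div_div, mul_comm ((w m) ^ 2) (τ ^ 2)]
      rw [Finset.sum_congr rfl hrw, ← Finset.sum_div, Real.sqrt_div (by positivity),
        Real.sqrt_sq hτ.le, div_le_one hτ]
      exact h
    · intro a ha
      have h0 : ∀ m ∈ Finset.univ, (z m - τ * w m * (z m / (τ * w m))) ^ 2 = 0 := by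
        intro m _
        have hne : τ * w m ≠ 0 := mul_ne_zero hτ.ne' (hwne m)
        rw [mul_div_cancel₀ (z m) hne, sub_self]
        ring
      rw [Finset.sum_congr rfl h0, Finset.sum_const, smul_zero]
      positivity
  · -- Part (ii)
    intro h
    set f : ℝ → ℝ := fun ν => ∑ m : Fin l, w m ^ 2 * z m ^ 2 / (w m ^ 2 + ν) ^ 2 with hf
    have hS0 : τ ^ 2 < ∑ m : Fin l, (z m / w m) ^ 2 :=
      (Real.lt_sqrt (x := τ) (y := ∑ m : Fin l, (z m / w m) ^ 2) hτ.le).mp h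
    have hf0 : f 0 = ∑ m : Fin l, (z m / w m) ^ 2 := by
      apply Finset.sum_congr rfl
      intro m _
      rw [add_zero, div_pow, show ((w m) ^ 2) ^ 2 = (w m) ^ 2 * ((w m) ^ 2) from by ring,
        mul_div_mul_left _ _ (ne_of_gt (pow_pos (hw m) 2))]
    obtain ⟨m0, hm0⟩ : ∃ m0 : Fin l, z m0 ≠ 0 := by
      by_contra hc
      push_neg at hc
      simp [hc] at hS0
      nlinarith
    set S : ℝ := ∑ m : Fin l, (w m * z m) ^ 2 with hSdef
    have hSpos : 0 < S := by
      apply Finset.sum_pos' (fun m _ => by positivity)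
      refine ⟨m0, Finset.mem_univ m0, ?_⟩
      have h1 : w m0 * z m0 ≠ 0 := mul_ne_zero (hwne m0) hm0
      positivity
    set M : ℝ := Real.sqrt S / τ with hMdef
    have hMpos : 0 < M := div_pos (Real.sqrt_pos.mpr hSpos) hτ
    have hfM : f M < τ ^ 2 := by
      have hstep : f M < ∑ m : Fin l, (w m * z m) ^ 2 / M ^ 2 := by
        apply Finset.sum_lt_sum
        · intro m _
          have h1 : (0:ℝ) < M ^ 2 := by positivity
          have hwp : (0:ℝ) < w m ^ 2 := pow_pos (hw m) 2
          have h2 : M ^ 2 ≤ (w m ^ 2 + M) ^ 2 := by nlinarith [mul_pos hwp hMpos]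
          calc w m ^ 2 * z m ^ 2 / (w m ^ 2 + M) ^ 2
              ≤ w m ^ 2 * z m ^ 2 / M ^ 2 :=
                div_le_div_of_nonneg_left (by positivity) h1 h2
            _ = (w m * z m) ^ 2 / M ^ 2 := by ring
        · refine ⟨m0, Finset.mem_univ m0, ?_⟩
          have h1 : (0:ℝ) < M ^ 2 := by positivity
          have hwp : (0:ℝ) < w m0 ^ 2 := pow_pos (hw m0) 2
          have h2 : M ^ 2 < (w m0 ^ 2 + M) ^ 2 := by nlinarith [mul_pos hwp hMpos]
          have h3 : (0:ℝ) < w m0 ^ 2 * z m0 ^ 2 := by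
            have hz : z m0 ≠ 0 := hm0
            positivity
          calc w m0 ^ 2 * z m0 ^ 2 / (w m0 ^ 2 + M) ^ 2
              < w m0 ^ 2 * z m0 ^ 2 / M ^ 2 := div_lt_div_of_pos_left h3 h1 h2
            _ = (w m0 * z m0) ^ 2 / M ^ 2 := by ring
      have hMS : ∑ m : Fin l, (w m * z m) ^ 2 / M ^ 2 = τ ^ 2 := by
        rw [← Finset.sum_div, ← hSdef, hMdef, div_pow, Real.sq_sqrt hSpos.le]
        field_simp
      linarith
    have hcont : ContinuousOn f (Set.Icc 0 M) := by
      apply continuousOn_finset_sum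
      intro m _
      apply ContinuousOn.div continuousOn_const
      · exact ((continuous_const.add continuous_id).pow 2).continuousOn
      · intro x hx
        have hwp : (0:ℝ) < w m ^ 2 := pow_pos (hw m) 2
        have hpx : 0 < w m ^ 2 + x := by nlinarith [hx.1]
        exact ne_of_gt (pow_pos hpx 2)
    obtain ⟨ν, hνmem, hfν⟩ := intermediate_value_Icc' hMpos.le hcont
      (Set.mem_Icc.mpr ⟨hfM.le, by rw [hf0]; exact hS0.le⟩)
    have hνpos : 0 < ν := by
      rcases lt_or_eq_of_le hνmem.1 with h' | h'
      · exact h'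
      · exfalso
        rw [← h', hf0] at hfν
        linarith
    have hfνs : (∑ m : Fin l, w m ^ 2 * z m ^ 2 / (w m ^ 2 + ν) ^ 2) = τ ^ 2 := hfν
    have hanti : ∀ ν1 ν2 : ℝ, 0 < ν1 → ν1 < ν2 → f ν2 < f ν1 := by
      intro ν1 ν2 h1 h12
      apply Finset.sum_lt_sum
      · intro m _
        have hwp : (0:ℝ) < w m ^ 2 := pow_pos (hw m) 2
        have hd1 : (0:ℝ) < (w m ^ 2 + ν1) ^ 2 := by nlinarith
        have hd2 : (w m ^ 2 + ν1) ^ 2 ≤ (w m ^ 2 + ν2) ^ 2 := by nlinarith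
        exact div_le_div_of_nonneg_left (by positivity) hd1 hd2
      · refine ⟨m0, Finset.mem_univ m0, ?_⟩
        have hwp : (0:ℝ) < w m0 ^ 2 := pow_pos (hw m0) 2
        have hd1 : (0:ℝ) < (w m0 ^ 2 + ν1) ^ 2 := by nlinarith
        have hd2 : (w m0 ^ 2 + ν1) ^ 2 < (w m0 ^ 2 + ν2) ^ 2 := by nlinarith
        have h3 : (0:ℝ) < w m0 ^ 2 * z m0 ^ 2 := by
          have hz : z m0 ≠ 0 := hm0
          positivity
        exact div_lt_div_of_pos_left h3 hd1 hd2
    refine ⟨ν, hνpos, hfνs, ?_, ?_, ?_, ?_, ?_⟩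
    · intro ν' hν' hfν'0
      have hfν' : f ν' = τ ^ 2 := hfν'0
      by_contra hne
      rcases lt_or_gt_of_ne hne with hlt | hgt
      · have := hanti ν' ν hν' hlt; rw [hfν, hfν'] at this; exact lt_irrefl _ this
      · have := hanti ν ν' hνpos hgt; rw [hfν, hfν'] at this; exact lt_irrefl _ this
    · have hrw : ∀ m ∈ Finset.univ, (w m * z m / (τ * (w m ^ 2 + ν))) ^ 2
          = (w m ^ 2 * z m ^ 2 / (w m ^ 2 + ν) ^ 2) / τ ^ 2 := by
        intro m _
        have hwp : (0:ℝ) < w m ^ 2 := pow_pos (hw m) 2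
        have hd : w m ^ 2 + ν ≠ 0 := by nlinarith
        field_simp
      rw [Finset.sum_congr rfl hrw, ← Finset.sum_div, hfνs, div_self (by positivity),
        Real.sqrt_one]
    · intro a ha
      set b : Fin l → ℝ := fun m => w m * z m / (τ * (w m ^ 2 + ν)) with hbdef
      have hbnorm : ∑ m : Fin l, b m ^ 2 = 1 := by
        have hrw : ∀ m ∈ Finset.univ, b m ^ 2
            = (w m ^ 2 * z m ^ 2 / (w m ^ 2 + ν) ^ 2) / τ ^ 2 := by
          intro m _
          have hwp : (0:ℝ) < w m ^ 2 := pow_pos (hw m) 2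
          have hd : w m ^ 2 + ν ≠ 0 := by nlinarith
          simp only [hbdef]
          field_simp
        rw [Finset.sum_congr rfl hrw, ← Finset.sum_div, hfνs, div_self (by positivity)]
      have hanorm : ∑ m : Fin l, a m ^ 2 ≤ 1 := by
        have h1 : Real.sqrt (∑ m : Fin l, a m ^ 2) ^ 2 ≤ 1 := by
          nlinarith [Real.sqrt_nonneg (∑ m : Fin l, a m ^ 2)]
        rwa [Real.sq_sqrt (by positivity)] at h1
      have hcs : (∑ m : Fin l, b m * a m) ≤ 1 := by
        have hcs0 := Finset.sum_mul_sq_le_sq_mul_sq Finset.univ b a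
        rw [hbnorm, one_mul] at hcs0
        nlinarith
      have key : ∀ m : Fin l, τ * w m * (z m - τ * w m * b m) = ν * τ ^ 2 * b m := by
        intro m
        have hwp : (0:ℝ) < w m ^ 2 := pow_pos (hw m) 2
        have hd : w m ^ 2 + ν ≠ 0 := by nlinarith
        simp only [hbdef]
        field_simp
        ring
      have hexp : ∀ m ∈ Finset.univ, (z m - τ * w m * a m) ^ 2
          = (z m - τ * w m * b m) ^ 2 + 2 * (ν * τ ^ 2 * b m) * (b m - a m)
            + (τ * w m * (b m - a m)) ^ 2 := by
        intro m _
        rw [← key m]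
        ring
      rw [Finset.sum_congr rfl hexp, Finset.sum_add_distrib, Finset.sum_add_distrib]
      have h2 : ∑ m : Fin l, 2 * (ν * τ ^ 2 * b m) * (b m - a m)
          = 2 * (ν * τ ^ 2) * ((∑ m : Fin l, b m ^ 2) - ∑ m : Fin l, b m * a m) := by
        rw [mul_sub (2 * (ν * τ ^ 2)), Finset.mul_sum, Finset.mul_sum,
          ← Finset.sum_sub_distrib]
        exact Finset.sum_congr rfl fun m _ => by ring
      rw [h2, hbnorm]
      have hLHS : (∑ m : Fin l, (z m - τ * w m * (w m * z m / (τ * (w m ^ 2 + ν)))) ^ 2)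
          = ∑ m : Fin l, (z m - τ * w m * b m) ^ 2 := rfl
      rw [hLHS]
      have h3 : (0:ℝ) ≤ ∑ m : Fin l, (τ * w m * (b m - a m)) ^ 2 :=
        Finset.sum_nonneg fun m _ => sq_nonneg _
      have h4 : (0:ℝ) ≤ 2 * (ν * τ ^ 2) := by nlinarith
      have h5 : (0:ℝ) ≤ 1 - ∑ m : Fin l, b m * a m := by linarith
      nlinarith [mul_nonneg h4 h5]
    · apply max_le _ hνpos.le
      set W : ℝ := Finset.univ.sup' ⟨⟨0, hl⟩, Finset.mem_univ _⟩ (fun m : Fin l => w m ^ 2)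
        with hW
      have hWpos : 0 < W := lt_of_lt_of_le (pow_pos (hw m0) 2)
        (Finset.le_sup' (fun m : Fin l => w m ^ 2) (Finset.mem_univ m0))
      have hterm : ∀ m ∈ Finset.univ, (w m * z m) ^ 2 / (W + ν) ^ 2
          ≤ w m ^ 2 * z m ^ 2 / (w m ^ 2 + ν) ^ 2 := by
        intro m _
        have hwm : w m ^ 2 ≤ W := Finset.le_sup' (fun m : Fin l => w m ^ 2) (Finset.mem_univ m)
        have hwp : (0:ℝ) < w m ^ 2 := pow_pos (hw m) 2
        have hd1 : (0:ℝ) < (w m ^ 2 + ν) ^ 2 := by nlinarith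
        have hd2 : (w m ^ 2 + ν) ^ 2 ≤ (W + ν) ^ 2 := by nlinarith
        calc (w m * z m) ^ 2 / (W + ν) ^ 2 = w m ^ 2 * z m ^ 2 / (W + ν) ^ 2 := by ring_nf
          _ ≤ w m ^ 2 * z m ^ 2 / (w m ^ 2 + ν) ^ 2 :=
              div_le_div_of_nonneg_left (by positivity) hd1 hd2
      have hsum : S / (W + ν) ^ 2 ≤ τ ^ 2 := by
        rw [hSdef, Finset.sum_div, ← hfνs]
        exact Finset.sum_le_sum hterm
      have hWν : 0 < W + ν := by linarith
      have hS' : S ≤ (τ * (W + ν)) ^ 2 := by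
        rw [div_le_iff₀ (by positivity)] at hsum
        nlinarith
      have hsq : Real.sqrt S ≤ τ * (W + ν) := by
        calc Real.sqrt S ≤ Real.sqrt ((τ * (W + ν)) ^ 2) := Real.sqrt_le_sqrt hS'
          _ = τ * (W + ν) := Real.sqrt_sq (by positivity)
      rw [sub_le_iff_le_add, div_le_iff₀ hτ]
      nlinarith
    · have hterm : ∀ m ∈ Finset.univ, w m ^ 2 * z m ^ 2 / (w m ^ 2 + ν) ^ 2
          ≤ (w m * z m) ^ 2 / ν ^ 2 := by
        intro m _
        have hd1 : (0:ℝ) < ν ^ 2 := by positivity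
        have hwp : (0:ℝ) < w m ^ 2 := pow_pos (hw m) 2
        have hd2 : ν ^ 2 ≤ (w m ^ 2 + ν) ^ 2 := by nlinarith
        calc w m ^ 2 * z m ^ 2 / (w m ^ 2 + ν) ^ 2 ≤ w m ^ 2 * z m ^ 2 / ν ^ 2 :=
              div_le_div_of_nonneg_left (by positivity) hd1 hd2
          _ = (w m * z m) ^ 2 / ν ^ 2 := by ring_nf
      have hsum : τ ^ 2 ≤ S / ν ^ 2 := by
        rw [← hfνs, hSdef, Finset.sum_div]
        exact Finset.sum_le_sum hterm
      have hS' : (τ * ν) ^ 2 ≤ S := by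
        rw [le_div_iff₀ (by positivity)] at hsum
        nlinarith
      have hτν : τ * ν ≤ Real.sqrt S := by
        rw [show τ * ν = Real.sqrt ((τ * ν) ^ 2) from (Real.sqrt_sq (by positivity)).symm]
        exact Real.sqrt_le_sqrt hS'
      rw [le_div_iff₀ hτ]
      nlinarith
end

section
/- Let λ > 0, X ∈ ℝ^{n×p}, 2 ≤ r ≤ p, and weights w_{ℓm} > 0. Suppose β̂ with β̂_r > 0 is a minimizer of the r-th row subproblem with associated dual vectors (a^{(ℓ)})_{ℓ=1}^{r−1} satisfying the optimality (KKT) conditions, and suppose in addition that ‖(a^{(ℓ)})_{g_ℓ}‖₂ < 1 strictly for every ℓ = 1,…,J(β̂), where J(β̂) is the largest ℓ ∈ {0,1,…,r−1} such that β̂_1 = ⋯ = β̂_ℓ = 0 (J(β̂) = 0 if β̂_1 ≠ 0). Then every minimizer β̃ of the r-th row subproblem satisfies β̃_1 = ⋯ = β̃_{J(β̂)} = 0; equivalently, writing K(β) = r − 1 − J(β), every other solution β̃ satisfies K(β̃) ≤ K(β̂). -/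
open Matrix

/-- Lemma `theory:moresparse`: if `β̂` minimizes the `r`-th row subproblem
with dual vectors `a^{(ℓ)}` satisfying the KKT conditions, and strict dual feasibility
`‖(a^{(ℓ)})_{g_ℓ}‖₂ < 1` holds for every group `ℓ` contained in the leading zero block of
`β̂` (whose 0-based length is `J`, the largest number of leading zero coordinates of `β̂`),
then every minimizer `β̃` of the subproblem also has its first `J` coordinates equal to
zero, i.e. `K(β̃) ≤ K(β̂)`. -/
theorem stmt_8 (n p r : ℕ) (hr2 : 2 ≤ r) (hrp : r ≤ p)
    (X : Matrix (Fin n) (Fin p) ℝ) (lam : ℝ) (hlam : 0 < lam)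
    (w : ℕ → ℕ → ℝ) (hw : ∀ ℓ m : ℕ, m ≤ ℓ → ℓ < r - 1 → 0 < w ℓ m)
    (Xr : Matrix (Fin n) (Fin r) ℝ) (hXr : ∀ i j, Xr i j = X i (Fin.castLE hrp j))
    (F : (Fin r → ℝ) → ℝ)
    (hF : ∀ β : Fin r → ℝ,
      F β = -2 * Real.log (β ⟨r - 1, by omega⟩)
        + (1 / (n : ℝ)) * ∑ i : Fin n, (Xr.mulVec β i) ^ 2
        + lam * ∑ ℓ ∈ Finset.range (r - 1),
            Real.sqrt (∑ m ∈ Finset.univ.filter (fun m : Fin r => (m : ℕ) ≤ ℓ),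
              w ℓ (m : ℕ) ^ 2 * β m ^ 2))
    (βh : Fin r → ℝ) (hβpos : 0 < βh ⟨r - 1, by omega⟩)
    (hmin : ∀ β : Fin r → ℝ, 0 < β ⟨r - 1, by omega⟩ → F βh ≤ F β)
    (a : ℕ → Fin r → ℝ)
    -- KKT conditions for (β̂, a):
    (hstat : ∀ j : Fin r,
      -(2 / βh ⟨r - 1, by omega⟩) * (if j = (⟨r - 1, by omega⟩ : Fin r) then 1 else 0)
        + (2 / (n : ℝ)) * ((Xrᵀ * Xr).mulVec βh j)
        + lam * ∑ ℓ ∈ Finset.range (r - 1),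
            (if (j : ℕ) ≤ ℓ then w ℓ (j : ℕ) else 0) * a ℓ j = 0)
    (hasupp : ∀ ℓ, ℓ < r - 1 → ∀ m : Fin r, ℓ < (m : ℕ) → a ℓ m = 0)
    (hagrad : ∀ ℓ, ℓ < r - 1 → (¬ ∀ m : Fin r, (m : ℕ) ≤ ℓ → βh m = 0) →
      ∀ m : Fin r, (m : ℕ) ≤ ℓ →
        a ℓ m = w ℓ (m : ℕ) * βh m /
          Real.sqrt (∑ m' ∈ Finset.univ.filter (fun m' : Fin r => (m' : ℕ) ≤ ℓ),
            (w ℓ (m' : ℕ) * βh m') ^ 2))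
    (hafeas : ∀ ℓ, ℓ < r - 1 → (∀ m : Fin r, (m : ℕ) ≤ ℓ → βh m = 0) →
      Real.sqrt (∑ m ∈ Finset.univ.filter (fun m : Fin r => (m : ℕ) ≤ ℓ), a ℓ m ^ 2) ≤ 1)
    -- J = J(β̂), the length of the leading zero block of β̂:
    (J : ℕ) (hJle : J ≤ r - 1)
    (hJzero : ∀ m : Fin r, (m : ℕ) < J → βh m = 0)
    (hJmax : ∀ h : J < r - 1, βh ⟨J, by omega⟩ ≠ 0)
    -- strict dual feasibility on the zero groups:
    (hstrict : ∀ ℓ, ℓ < J →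
      Real.sqrt (∑ m ∈ Finset.univ.filter (fun m : Fin r => (m : ℕ) ≤ ℓ), a ℓ m ^ 2) < 1) :
    ∀ βt : Fin r → ℝ, 0 < βt ⟨r - 1, by omega⟩ →
      (∀ β : Fin r → ℝ, 0 < β ⟨r - 1, by omega⟩ → F βt ≤ F β) →
      ∀ m : Fin r, (m : ℕ) < J → βt m = 0 := by
  intro βt hβt hminT
  by_contra hcon
  push_neg at hcon
  obtain ⟨m0, hm0J, hm0ne⟩ := hcon
  have hr1lt : r - 1 < r := by omega
  set r1 : Fin r := ⟨r - 1, hr1lt⟩ with hr1def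
  -- squared-norm of a^{(ℓ)} restricted to group ℓ is ≤ 1
  have hanorm : ∀ ℓ, ℓ < r - 1 →
      Real.sqrt (∑ m ∈ Finset.univ.filter (fun m : Fin r => (m : ℕ) ≤ ℓ), a ℓ m ^ 2) ≤ 1 := by
    intro ℓ hℓ
    by_cases hz : ∀ m : Fin r, (m : ℕ) ≤ ℓ → βh m = 0
    · exact hafeas ℓ hℓ hz
    · have hD : 0 < ∑ m' ∈ Finset.univ.filter (fun m' : Fin r => (m' : ℕ) ≤ ℓ),
          (w ℓ (m' : ℕ) * βh m') ^ 2 := by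
        push_neg at hz
        obtain ⟨m, hmle, hmne⟩ := hz
        refine Finset.sum_pos' (fun _ _ => sq_nonneg _) ⟨m, by simp [hmle], ?_⟩
        exact sq_pos_of_ne_zero (mul_ne_zero (hw ℓ (m : ℕ) hmle hℓ).ne' hmne)
      have hz' : ¬ ∀ m : Fin r, (m : ℕ) ≤ ℓ → βh m = 0 := by
        push_neg at hz ⊢; exact hz
      have hsum : ∑ m ∈ Finset.univ.filter (fun m : Fin r => (m : ℕ) ≤ ℓ), a ℓ m ^ 2 = 1 := by
        have hrw : ∀ m ∈ Finset.univ.filter (fun m : Fin r => (m : ℕ) ≤ ℓ),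
            a ℓ m ^ 2 = (w ℓ (m : ℕ) * βh m) ^ 2 /
              (Real.sqrt (∑ m' ∈ Finset.univ.filter (fun m' : Fin r => (m' : ℕ) ≤ ℓ),
                (w ℓ (m' : ℕ) * βh m') ^ 2)) ^ 2 := by
          intro m hm
          rw [hagrad ℓ hℓ hz' m (by simpa using hm), div_pow]
        rw [Finset.sum_congr rfl hrw, ← Finset.sum_div, Real.sq_sqrt hD.le, div_self hD.ne']
      rw [hsum, Real.sqrt_one]
  -- equality: ⟨a^{(ℓ)}, (W β̂)⟩ = ‖(W β̂)‖ on each group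
  have heq : ∀ ℓ, ℓ < r - 1 →
      ∑ m ∈ Finset.univ.filter (fun m : Fin r => (m : ℕ) ≤ ℓ), a ℓ m * (w ℓ (m : ℕ) * βh m)
        = Real.sqrt (∑ m ∈ Finset.univ.filter (fun m : Fin r => (m : ℕ) ≤ ℓ),
            w ℓ (m : ℕ) ^ 2 * βh m ^ 2) := by
    intro ℓ hℓ
    have hconv : ∑ m ∈ Finset.univ.filter (fun m : Fin r => (m : ℕ) ≤ ℓ),
        w ℓ (m : ℕ) ^ 2 * βh m ^ 2
        = ∑ m ∈ Finset.univ.filter (fun m : Fin r => (m : ℕ) ≤ ℓ), (w ℓ (m : ℕ) * βh m) ^ 2 :=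
      Finset.sum_congr rfl (fun m _ => by ring)
    by_cases hz : ∀ m : Fin r, (m : ℕ) ≤ ℓ → βh m = 0
    · rw [Finset.sum_eq_zero (fun m hm => by
        rw [hz m (by simpa using hm)]; ring)]
      rw [Finset.sum_eq_zero (fun m hm => by
        rw [hz m (by simpa using hm)]; ring), Real.sqrt_zero]
    · have hD : 0 < ∑ m' ∈ Finset.univ.filter (fun m' : Fin r => (m' : ℕ) ≤ ℓ),
          (w ℓ (m' : ℕ) * βh m') ^ 2 := by
        push_neg at hz
        obtain ⟨m, hmle, hmne⟩ := hz
        refine Finset.sum_pos' (fun _ _ => sq_nonneg _) ⟨m, by simp [hmle], ?_⟩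
        exact sq_pos_of_ne_zero (mul_ne_zero (hw ℓ (m : ℕ) hmle hℓ).ne' hmne)
      have hDs : 0 < Real.sqrt (∑ m' ∈ Finset.univ.filter (fun m' : Fin r => (m' : ℕ) ≤ ℓ),
          (w ℓ (m' : ℕ) * βh m') ^ 2) := Real.sqrt_pos.mpr hD
      have hrw : ∀ m ∈ Finset.univ.filter (fun m : Fin r => (m : ℕ) ≤ ℓ),
          a ℓ m * (w ℓ (m : ℕ) * βh m) = (w ℓ (m : ℕ) * βh m) ^ 2 /
            Real.sqrt (∑ m' ∈ Finset.univ.filter (fun m' : Fin r => (m' : ℕ) ≤ ℓ),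
              (w ℓ (m' : ℕ) * βh m') ^ 2) := by
        intro m hm
        rw [hagrad ℓ hℓ hz m (by simpa using hm)]
        ring
      rw [Finset.sum_congr rfl hrw, ← Finset.sum_div, hconv, Real.div_sqrt]
  -- Cauchy–Schwarz bound on each group for β̃
  have hle : ∀ ℓ, ℓ < r - 1 →
      ∑ m ∈ Finset.univ.filter (fun m : Fin r => (m : ℕ) ≤ ℓ), a ℓ m * (w ℓ (m : ℕ) * βt m)
        ≤ Real.sqrt (∑ m ∈ Finset.univ.filter (fun m : Fin r => (m : ℕ) ≤ ℓ),
            w ℓ (m : ℕ) ^ 2 * βt m ^ 2) := by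
    intro ℓ hℓ
    have hcs := Real.sum_mul_le_sqrt_mul_sqrt
      (Finset.univ.filter (fun m : Fin r => (m : ℕ) ≤ ℓ)) (a ℓ)
      (fun m => w ℓ (m : ℕ) * βt m)
    have hconv : ∑ m ∈ Finset.univ.filter (fun m : Fin r => (m : ℕ) ≤ ℓ),
        (w ℓ (m : ℕ) * βt m) ^ 2
        = ∑ m ∈ Finset.univ.filter (fun m : Fin r => (m : ℕ) ≤ ℓ),
          w ℓ (m : ℕ) ^ 2 * βt m ^ 2 := Finset.sum_congr rfl (fun m _ => by ring)
    rw [hconv] at hcs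
    refine hcs.trans ?_
    exact mul_le_of_le_one_left (Real.sqrt_nonneg _) (hanorm ℓ hℓ)
  -- strict inequality at ℓ0 = m0
  have hm0r : (m0 : ℕ) < r - 1 := lt_of_lt_of_le hm0J hJle
  have hlt :
      ∑ m ∈ Finset.univ.filter (fun m : Fin r => (m : ℕ) ≤ (m0 : ℕ)),
          a (m0 : ℕ) m * (w (m0 : ℕ) (m : ℕ) * βt m)
        < Real.sqrt (∑ m ∈ Finset.univ.filter (fun m : Fin r => (m : ℕ) ≤ (m0 : ℕ)),
            w (m0 : ℕ) (m : ℕ) ^ 2 * βt m ^ 2) := by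
    have hcs := Real.sum_mul_le_sqrt_mul_sqrt
      (Finset.univ.filter (fun m : Fin r => (m : ℕ) ≤ (m0 : ℕ))) (a (m0 : ℕ))
      (fun m => w (m0 : ℕ) (m : ℕ) * βt m)
    have hconv : ∑ m ∈ Finset.univ.filter (fun m : Fin r => (m : ℕ) ≤ (m0 : ℕ)),
        (w (m0 : ℕ) (m : ℕ) * βt m) ^ 2
        = ∑ m ∈ Finset.univ.filter (fun m : Fin r => (m : ℕ) ≤ (m0 : ℕ)),
          w (m0 : ℕ) (m : ℕ) ^ 2 * βt m ^ 2 := Finset.sum_congr rfl (fun m _ => by ring)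
    rw [hconv] at hcs
    have hpos : 0 < ∑ m ∈ Finset.univ.filter (fun m : Fin r => (m : ℕ) ≤ (m0 : ℕ)),
        w (m0 : ℕ) (m : ℕ) ^ 2 * βt m ^ 2 := by
      refine Finset.sum_pos' (fun m _ => by positivity) ⟨m0, by simp, ?_⟩
      exact mul_pos (pow_pos (hw (m0 : ℕ) (m0 : ℕ) le_rfl hm0r) 2)
        (sq_pos_of_ne_zero hm0ne)
    have hsqrtpos : 0 < Real.sqrt (∑ m ∈ Finset.univ.filter
        (fun m : Fin r => (m : ℕ) ≤ (m0 : ℕ)), w (m0 : ℕ) (m : ℕ) ^ 2 * βt m ^ 2) :=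
      Real.sqrt_pos.mpr hpos
    refine hcs.trans_lt ?_
    have := hstrict (m0 : ℕ) hm0J
    calc Real.sqrt (∑ m ∈ Finset.univ.filter (fun m : Fin r => (m : ℕ) ≤ (m0 : ℕ)),
            a (m0 : ℕ) m ^ 2)
          * Real.sqrt (∑ m ∈ Finset.univ.filter (fun m : Fin r => (m : ℕ) ≤ (m0 : ℕ)),
            w (m0 : ℕ) (m : ℕ) ^ 2 * βt m ^ 2)
        < 1 * Real.sqrt (∑ m ∈ Finset.univ.filter (fun m : Fin r => (m : ℕ) ≤ (m0 : ℕ)),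
            w (m0 : ℕ) (m : ℕ) ^ 2 * βt m ^ 2) := by
          exact mul_lt_mul_of_pos_right this hsqrtpos
      _ = _ := one_mul _
  -- one-sided gradient bound for the log term
  have hA : -(2 / βh r1) * (βt r1 - βh r1)
      ≤ -2 * Real.log (βt r1) - -2 * Real.log (βh r1) := by
    have h1 : Real.log (βt r1 / βh r1) ≤ βt r1 / βh r1 - 1 :=
      Real.log_le_sub_one_of_pos (by positivity)
    rw [Real.log_div hβt.ne' hβpos.ne'] at h1
    have h2 : -(2 / βh r1) * (βt r1 - βh r1) = -2 * (βt r1 / βh r1 - 1) := by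
      field_simp
    nlinarith [h1]
  -- one-sided gradient bound for the quadratic term
  have hdec : ∀ i, Xr.mulVec βt i = Xr.mulVec βh i + Xr.mulVec (βt - βh) i := by
    intro i
    rw [Matrix.mulVec_sub]
    simp
  have hexp : ∑ i : Fin n, (Xr.mulVec βt i) ^ 2
      = ∑ i : Fin n, (Xr.mulVec βh i) ^ 2
        + 2 * ∑ i : Fin n, Xr.mulVec βh i * Xr.mulVec (βt - βh) i
        + ∑ i : Fin n, (Xr.mulVec (βt - βh) i) ^ 2 := by
    rw [Finset.mul_sum, ← Finset.sum_add_distrib, ← Finset.sum_add_distrib]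
    refine Finset.sum_congr rfl fun i _ => ?_
    rw [hdec i]; ring
  have hnn : 0 ≤ ∑ i : Fin n, (Xr.mulVec (βt - βh) i) ^ 2 :=
    Finset.sum_nonneg fun i _ => sq_nonneg _
  have hB2 : (1 / (n : ℝ)) * ∑ i : Fin n, (Xr.mulVec βh i) ^ 2
      + (2 / (n : ℝ)) * ∑ i : Fin n, Xr.mulVec βh i * Xr.mulVec (βt - βh) i
      ≤ (1 / (n : ℝ)) * ∑ i : Fin n, (Xr.mulVec βt i) ^ 2 := by
    have hn : (0 : ℝ) ≤ 1 / (n : ℝ) := by positivity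
    have h3 : ∑ i : Fin n, (Xr.mulVec βh i) ^ 2
        + 2 * ∑ i : Fin n, Xr.mulVec βh i * Xr.mulVec (βt - βh) i
        ≤ ∑ i : Fin n, (Xr.mulVec βt i) ^ 2 := by linarith [hexp, hnn]
    have h4 := mul_le_mul_of_nonneg_left h3 hn
    have h5 : (1 / (n : ℝ)) * (∑ i : Fin n, (Xr.mulVec βh i) ^ 2
        + 2 * ∑ i : Fin n, Xr.mulVec βh i * Xr.mulVec (βt - βh) i)
        = (1 / (n : ℝ)) * ∑ i : Fin n, (Xr.mulVec βh i) ^ 2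
          + (2 / (n : ℝ)) * ∑ i : Fin n, Xr.mulVec βh i * Xr.mulVec (βt - βh) i := by
      ring
    linarith
  -- rewrite the inner product through the Gram matrix
  have hinner : ∑ j : Fin r, ((Xrᵀ * Xr).mulVec βh) j * (βt j - βh j)
      = ∑ i : Fin n, Xr.mulVec βh i * Xr.mulVec (βt - βh) i := by
    have h1 : ∑ j : Fin r, ((Xrᵀ * Xr).mulVec βh) j * (βt j - βh j)
        = ((Xrᵀ * Xr).mulVec βh) ⬝ᵥ (βt - βh) := by
      simp [dotProduct, Pi.sub_apply]
    rw [h1, ← Matrix.mulVec_mulVec, Matrix.mulVec_transpose, ← Matrix.dotProduct_mulVec]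
    rfl
  -- sum the stationarity conditions against βt - βh
  have hsum1 : ∑ j : Fin r,
      (-(2 / βh r1) * (if j = r1 then 1 else 0)
        + (2 / (n : ℝ)) * ((Xrᵀ * Xr).mulVec βh j)) * (βt j - βh j)
      = -(2 / βh r1) * (βt r1 - βh r1)
        + (2 / (n : ℝ)) * ∑ j : Fin r, ((Xrᵀ * Xr).mulVec βh) j * (βt j - βh j) := by
    simp_rw [add_mul, Finset.sum_add_distrib, mul_assoc, ← Finset.mul_sum]
    congr 1
    · congr 1
      simp [ite_mul, Finset.sum_ite_eq']
  have hsum2 : ∑ j : Fin r,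
      (lam * ∑ ℓ ∈ Finset.range (r - 1),
        (if (j : ℕ) ≤ ℓ then w ℓ (j : ℕ) else 0) * a ℓ j) * (βt j - βh j)
      = lam * ∑ ℓ ∈ Finset.range (r - 1),
          ∑ m ∈ Finset.univ.filter (fun m : Fin r => (m : ℕ) ≤ ℓ),
            (w ℓ (m : ℕ) * a ℓ m) * (βt m - βh m) := by
    simp_rw [mul_assoc lam, ← Finset.mul_sum]
    congr 1
    simp_rw [Finset.sum_mul]
    rw [Finset.sum_comm]
    refine Finset.sum_congr rfl fun ℓ _ => ?_
    rw [Finset.sum_filter]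
    refine Finset.sum_congr rfl fun j _ => ?_
    by_cases h : (j : ℕ) ≤ ℓ <;> simp [h] <;> ring
  have hkey : -(2 / βh r1) * (βt r1 - βh r1)
      + (2 / (n : ℝ)) * ∑ i : Fin n, Xr.mulVec βh i * Xr.mulVec (βt - βh) i
      = -(lam * ∑ ℓ ∈ Finset.range (r - 1),
          ∑ m ∈ Finset.univ.filter (fun m : Fin r => (m : ℕ) ≤ ℓ),
            (w ℓ (m : ℕ) * a ℓ m) * (βt m - βh m)) := by
    have hG : ∀ j : Fin r,
        -(2 / βh r1) * (if j = r1 then 1 else 0)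
          + (2 / (n : ℝ)) * ((Xrᵀ * Xr).mulVec βh j)
        = -(lam * ∑ ℓ ∈ Finset.range (r - 1),
            (if (j : ℕ) ≤ ℓ then w ℓ (j : ℕ) else 0) * a ℓ j) := by
      intro j; have := hstat j; linarith
    calc -(2 / βh r1) * (βt r1 - βh r1)
        + (2 / (n : ℝ)) * ∑ i : Fin n, Xr.mulVec βh i * Xr.mulVec (βt - βh) i
        = ∑ j : Fin r,
          (-(2 / βh r1) * (if j = r1 then 1 else 0)
            + (2 / (n : ℝ)) * ((Xrᵀ * Xr).mulVec βh j)) * (βt j - βh j) := by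
          rw [hsum1, hinner]
      _ = ∑ j : Fin r,
          (-(lam * ∑ ℓ ∈ Finset.range (r - 1),
            (if (j : ℕ) ≤ ℓ then w ℓ (j : ℕ) else 0) * a ℓ j)) * (βt j - βh j) :=
          Finset.sum_congr rfl fun j _ => by rw [hG j]
      _ = -∑ j : Fin r,
          (lam * ∑ ℓ ∈ Finset.range (r - 1),
            (if (j : ℕ) ≤ ℓ then w ℓ (j : ℕ) else 0) * a ℓ j) * (βt j - βh j) := by
          simp [neg_mul]
      _ = _ := by rw [hsum2]
  -- decompose the penalty difference
  have hsplit : ∑ ℓ ∈ Finset.range (r - 1),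
        Real.sqrt (∑ m ∈ Finset.univ.filter (fun m : Fin r => (m : ℕ) ≤ ℓ),
          w ℓ (m : ℕ) ^ 2 * βt m ^ 2)
      - ∑ ℓ ∈ Finset.range (r - 1),
        Real.sqrt (∑ m ∈ Finset.univ.filter (fun m : Fin r => (m : ℕ) ≤ ℓ),
          w ℓ (m : ℕ) ^ 2 * βh m ^ 2)
      - ∑ ℓ ∈ Finset.range (r - 1),
          ∑ m ∈ Finset.univ.filter (fun m : Fin r => (m : ℕ) ≤ ℓ),
            (w ℓ (m : ℕ) * a ℓ m) * (βt m - βh m)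
      = ∑ ℓ ∈ Finset.range (r - 1),
          (Real.sqrt (∑ m ∈ Finset.univ.filter (fun m : Fin r => (m : ℕ) ≤ ℓ),
              w ℓ (m : ℕ) ^ 2 * βt m ^ 2)
            - ∑ m ∈ Finset.univ.filter (fun m : Fin r => (m : ℕ) ≤ ℓ),
                a ℓ m * (w ℓ (m : ℕ) * βt m)) := by
    rw [← Finset.sum_sub_distrib, ← Finset.sum_sub_distrib]
    refine Finset.sum_congr rfl fun ℓ hℓ => ?_
    rw [← heq ℓ (Finset.mem_range.mp hℓ)]
    rw [show ∑ m ∈ Finset.univ.filter (fun m : Fin r => (m : ℕ) ≤ ℓ),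
        (w ℓ (m : ℕ) * a ℓ m) * (βt m - βh m)
        = ∑ m ∈ Finset.univ.filter (fun m : Fin r => (m : ℕ) ≤ ℓ),
            (a ℓ m * (w ℓ (m : ℕ) * βt m) - a ℓ m * (w ℓ (m : ℕ) * βh m)) from
      Finset.sum_congr rfl fun m _ => by ring]
    rw [Finset.sum_sub_distrib]
    ring
  -- the positive gap
  have hgap : 0 < ∑ ℓ ∈ Finset.range (r - 1),
      (Real.sqrt (∑ m ∈ Finset.univ.filter (fun m : Fin r => (m : ℕ) ≤ ℓ),
          w ℓ (m : ℕ) ^ 2 * βt m ^ 2)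
        - ∑ m ∈ Finset.univ.filter (fun m : Fin r => (m : ℕ) ≤ ℓ),
            a ℓ m * (w ℓ (m : ℕ) * βt m)) := by
    refine Finset.sum_pos' (fun ℓ hℓ => sub_nonneg.mpr (hle ℓ (Finset.mem_range.mp hℓ)))
      ⟨(m0 : ℕ), Finset.mem_range.mpr hm0r, sub_pos.mpr hlt⟩
  -- assemble
  have e1 : lam * ∑ ℓ ∈ Finset.range (r - 1),
        Real.sqrt (∑ m ∈ Finset.univ.filter (fun m : Fin r => (m : ℕ) ≤ ℓ),
          w ℓ (m : ℕ) ^ 2 * βt m ^ 2)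
      = lam * ∑ ℓ ∈ Finset.range (r - 1),
          Real.sqrt (∑ m ∈ Finset.univ.filter (fun m : Fin r => (m : ℕ) ≤ ℓ),
            w ℓ (m : ℕ) ^ 2 * βh m ^ 2)
        + lam * ∑ ℓ ∈ Finset.range (r - 1),
            ∑ m ∈ Finset.univ.filter (fun m : Fin r => (m : ℕ) ≤ ℓ),
              (w ℓ (m : ℕ) * a ℓ m) * (βt m - βh m)
        + lam * ∑ ℓ ∈ Finset.range (r - 1),
            (Real.sqrt (∑ m ∈ Finset.univ.filter (fun m : Fin r => (m : ℕ) ≤ ℓ),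
                w ℓ (m : ℕ) ^ 2 * βt m ^ 2)
              - ∑ m ∈ Finset.univ.filter (fun m : Fin r => (m : ℕ) ≤ ℓ),
                  a ℓ m * (w ℓ (m : ℕ) * βt m)) := by
    have h3 : ∑ ℓ ∈ Finset.range (r - 1),
        Real.sqrt (∑ m ∈ Finset.univ.filter (fun m : Fin r => (m : ℕ) ≤ ℓ),
          w ℓ (m : ℕ) ^ 2 * βt m ^ 2)
        = ∑ ℓ ∈ Finset.range (r - 1),
            Real.sqrt (∑ m ∈ Finset.univ.filter (fun m : Fin r => (m : ℕ) ≤ ℓ),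
              w ℓ (m : ℕ) ^ 2 * βh m ^ 2)
          + ∑ ℓ ∈ Finset.range (r - 1),
              ∑ m ∈ Finset.univ.filter (fun m : Fin r => (m : ℕ) ≤ ℓ),
                (w ℓ (m : ℕ) * a ℓ m) * (βt m - βh m)
          + ∑ ℓ ∈ Finset.range (r - 1),
              (Real.sqrt (∑ m ∈ Finset.univ.filter (fun m : Fin r => (m : ℕ) ≤ ℓ),
                  w ℓ (m : ℕ) ^ 2 * βt m ^ 2)
                - ∑ m ∈ Finset.univ.filter (fun m : Fin r => (m : ℕ) ≤ ℓ),
                    a ℓ m * (w ℓ (m : ℕ) * βt m)) := by linarith [hsplit]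
    rw [h3]; ring
  have hmain := hminT βh hβpos
  rw [hF βt, hF βh] at hmain
  have hposgap : 0 < lam * ∑ ℓ ∈ Finset.range (r - 1),
      (Real.sqrt (∑ m ∈ Finset.univ.filter (fun m : Fin r => (m : ℕ) ≤ ℓ),
          w ℓ (m : ℕ) ^ 2 * βt m ^ 2)
        - ∑ m ∈ Finset.univ.filter (fun m : Fin r => (m : ℕ) ≤ ℓ),
            a ℓ m * (w ℓ (m : ℕ) * βt m)) := mul_pos hlam hgap
  linarith [hA, hB2, hkey, e1, hmain, hposgap]
end

section
/- Let L be a p×p lower-triangular real matrix with strictly positive diagonal entries, let Σ = (LᵀL)^{−1}, and fix r ∈ {2,…,p}. Suppose L has bandwidth K_r ≥ 1 at row r, i.e., L_{rj} = 0 for all 1 ≤ j < r − K_r, and let I_r = {r−K_r,…,r−1}. Then the Schur complement identity Σ_{rr} − Σ_{r I_r}·(Σ_{I_r I_r})^{−1}·Σ_{I_r r} = 1/L_{rr}² holds; i.e., the conditional variance of the r-th coordinate given the coordinates in I_r under the N(0,Σ) distribution equals L_{rr}^{−2}. -/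
open Matrix

private lemma posDef_submatrix' {m n : ℕ} {M : Matrix (Fin n) (Fin n) ℝ} (hM : M.PosDef)
    (e : Fin m → Fin n) (he : Function.Injective e) : (M.submatrix e e).PosDef := by
  classical
  set P : Matrix (Fin n) (Fin m) ℝ := Matrix.of (fun k i => if e i = k then 1 else 0) with hP
  have hsub : M.submatrix e e = Pᵀ * M * P := by
    ext i j
    simp [hP, Matrix.mul_apply, mul_ite, ite_mul, mul_one, mul_zero, one_mul, zero_mul,
      Finset.sum_ite_eq]
  refine Matrix.PosDef.of_dotProduct_mulVec_pos (hM.1.submatrix e) (fun x hx => ?_)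
  have hPx : P *ᵥ x ≠ 0 := by
    obtain ⟨i, hi⟩ := Function.ne_iff.mp hx
    intro h
    apply hi
    have h2 := congrFun h (e i)
    simpa [hP, Matrix.mulVec, dotProduct, ite_mul, one_mul, zero_mul, he.eq_iff,
      Finset.sum_ite_eq'] using h2
  have key : star x ⬝ᵥ (M.submatrix e e *ᵥ x) = star (P *ᵥ x) ⬝ᵥ (M *ᵥ (P *ᵥ x)) := by
    rw [hsub, star_trivial, star_trivial, ← Matrix.mulVec_mulVec, ← Matrix.mulVec_mulVec,
      Matrix.dotProduct_mulVec, Matrix.vecMul_transpose]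
  rw [key]
  exact hM.dotProduct_mulVec_pos hPx

/-- Let `L` be lower triangular with positive diagonal, `Σ = (LᵀL)⁻¹`, and
fix a (1-based) row index `r ∈ {2,…,p}` with bandwidth `K_r ≥ 1`, i.e. `L_{rj} = 0` for
`1 ≤ j < r − K_r` (0-based: `L ⟨r-1⟩ j = 0` for `j + K + 1 < r`).  With
`I_r = {r−K,…,r−1}` (0-based embedding `e i = r−1−K+i`), the Schur complement identity
`Σ_{rr} − Σ_{r I_r} (Σ_{I_r I_r})⁻¹ Σ_{I_r r} = 1/L_{rr}²` holds. -/
theorem stmt_19 (p : ℕ) (L : Matrix (Fin p) (Fin p) ℝ)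
    (hLtri : ∀ i j : Fin p, i < j → L i j = 0)
    (hLdiag : ∀ i : Fin p, 0 < L i i)
    (r K : ℕ) (hr2 : 2 ≤ r) (hrp : r ≤ p) (hK1 : 1 ≤ K) (hKr : K ≤ r - 1)
    (Sig : Matrix (Fin p) (Fin p) ℝ) (hSig : Sig = (Lᵀ * L)⁻¹)
    (e : Fin K → Fin p)
    (he : ∀ i : Fin K, (e i : ℕ) = r - 1 - K + (i : ℕ))
    (hband : ∀ j : Fin p, (j : ℕ) + K + 1 < r → L ⟨r - 1, by omega⟩ j = 0) :
    Sig ⟨r - 1, by omega⟩ ⟨r - 1, by omega⟩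
      - dotProduct
          (Matrix.vecMul (fun i : Fin K => Sig ⟨r - 1, by omega⟩ (e i))
            (Sig.submatrix e e)⁻¹)
          (fun i : Fin K => Sig (e i) ⟨r - 1, by omega⟩)
      = 1 / (L ⟨r - 1, by omega⟩ ⟨r - 1, by omega⟩) ^ 2 := by
  classical
  set ρ : Fin p := ⟨r - 1, by omega⟩ with hρ
  -- L is invertible
  have hLtri' : L.BlockTriangular OrderDual.toDual := fun i j h => hLtri i j h
  have hdetL : L.det ≠ 0 := by
    rw [Matrix.det_of_lowerTriangular L hLtri']
    exact (Finset.prod_pos (fun i _ => hLdiag i)).ne'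
  have hUL : IsUnit L := (Matrix.isUnit_iff_isUnit_det L).2 hdetL.isUnit
  have hdetLt : Lᵀ.det ≠ 0 := by rwa [Matrix.det_transpose]
  -- A = LᵀL is positive definite
  have hA : (Lᵀ * L).PosDef := by
    refine Matrix.PosDef.of_dotProduct_mulVec_pos (by simpa using Matrix.isHermitian_conjTranspose_mul_self L) (fun x hx => ?_)
    have hinj := Matrix.mulVec_injective_iff_isUnit.2 hUL
    have hLx : L *ᵥ x ≠ 0 := fun h => hx (hinj (by simpa using h))
    have hq : star x ⬝ᵥ ((Lᵀ * L) *ᵥ x) = (L *ᵥ x) ⬝ᵥ (L *ᵥ x) := by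
      rw [star_trivial, ← Matrix.mulVec_mulVec, Matrix.dotProduct_mulVec,
        Matrix.vecMul_transpose]
    rw [hq]
    refine lt_of_le_of_ne (Finset.sum_nonneg (fun i _ => mul_self_nonneg _))
      (fun h => hLx ((dotProduct_self_eq_zero).1 h.symm))
  have hSigPD : Sig.PosDef := hSig ▸ hA.inv
  -- N = (Lᵀ)⁻¹ and L * Sig = N
  set N : Matrix (Fin p) (Fin p) ℝ := (Lᵀ)⁻¹ with hN
  have hLSig : L * Sig = N := by
    rw [hSig, Matrix.mul_inv_rev, ← Matrix.mul_assoc, Matrix.mul_nonsing_inv L hdetL.isUnit,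
      Matrix.one_mul]
  have hLTtri : Lᵀ.BlockTriangular id := fun i j h => hLtri j i h
  haveI : Invertible Lᵀ := Lᵀ.invertibleOfIsUnitDet hdetLt.isUnit
  have hNtri : N.BlockTriangular id := Matrix.blockTriangular_inv_of_blockTriangular hLTtri
  -- diagonal entry of N
  have hNdiag : L ρ ρ * N ρ ρ = 1 := by
    have h1 : Lᵀ * N = 1 := Matrix.mul_nonsing_inv Lᵀ hdetLt.isUnit
    have h2 := congrFun (congrFun h1 ρ) ρ
    rw [Matrix.mul_apply] at h2
    rw [Finset.sum_eq_single ρ] at h2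
    · simpa using h2
    · intro k _ hk
      rcases lt_or_gt_of_ne hk with h | h
      · rw [Matrix.transpose_apply, hLtri k ρ h, zero_mul]
      · rw [hNtri h, mul_zero]
    · simp
  have hLρρ : L ρ ρ ≠ 0 := (hLdiag ρ).ne'
  -- the key row identity
  have hstar : ∀ j : Fin p,
      (∑ i : Fin K, L ρ (e i) * Sig (e i) j) + L ρ ρ * Sig ρ j = N ρ j := by
    intro j
    have h1 := congrFun (congrFun hLSig ρ) j
    rw [Matrix.mul_apply] at h1
    set e' : Fin (K + 1) → Fin p := fun i => ⟨r - 1 - K + (i : ℕ), by omega⟩ with he'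
    have hinj' : Function.Injective e' := by
      intro a b hab
      have : (e' a : ℕ) = (e' b : ℕ) := by rw [hab]
      simp only [he'] at this
      exact Fin.ext (by omega)
    have hsum : ∑ k : Fin p, L ρ k * Sig k j = ∑ i : Fin (K + 1), L ρ (e' i) * Sig (e' i) j := by
      rw [← Finset.sum_image (g := e') (f := fun k => L ρ k * Sig k j)
        (fun a _ b _ h => hinj' h)]
      refine (Finset.sum_subset (Finset.subset_univ _) (fun k _ hk => ?_)).symm
      have hk' : (k : ℕ) < r - 1 - K ∨ r - 1 < (k : ℕ) := by
        by_contra hcon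
        push_neg at hcon
        apply hk
        refine Finset.mem_image.2 ⟨⟨(k : ℕ) - (r - 1 - K), by omega⟩, Finset.mem_univ _, ?_⟩
        simp only [he']
        exact Fin.ext (by simp; omega)
      rcases hk' with h | h
      · rw [hband k (by omega), zero_mul]
      · rw [hLtri ρ k (by exact h), zero_mul]
    rw [hsum, Fin.sum_univ_castSucc] at h1
    have hlast : e' (Fin.last K) = ρ := Fin.ext (by simp [he', hρ]; omega)
    have hcast : ∀ i : Fin K, e' i.castSucc = e i := fun i =>
      Fin.ext (by simp [he', he i])
    rw [hlast] at h1
    rw [← h1]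
    congr 1
    exact Finset.sum_congr rfl (fun i _ => by rw [hcast i])
  -- e is injective, submatrix is invertible
  have heinj : Function.Injective e := by
    intro a b hab
    have : (e a : ℕ) = (e b : ℕ) := by rw [hab]
    rw [he a, he b] at this
    exact Fin.ext (by omega)
  have hS : (Sig.submatrix e e).PosDef := posDef_submatrix' hSigPD e heinj
  have hSinv : Sig.submatrix e e * (Sig.submatrix e e)⁻¹ = 1 :=
    Matrix.mul_nonsing_inv _ hS.det_pos.ne'.isUnit
  -- the coefficient vector
  set c : Fin K → ℝ := fun i => -(L ρ (e i) / L ρ ρ) with hc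
  have hrow : (fun i : Fin K => Sig ρ (e i)) = Matrix.vecMul c (Sig.submatrix e e) := by
    funext m
    have h := hstar (e m)
    have hz : N ρ (e m) = 0 := hNtri (show ((e m : Fin p) : ℕ) < (ρ : ℕ) by
      rw [he m]; simp [hρ]; omega)
    rw [hz] at h
    have hsum : ∑ i : Fin K, L ρ (e i) * Sig (e i) (e m) = -(L ρ ρ * Sig ρ (e m)) := by
      linarith
    simp only [Matrix.vecMul, dotProduct, Matrix.submatrix_apply, hc]
    have : ∑ i : Fin K, -(L ρ (e i) / L ρ ρ) * Sig (e i) (e m)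
        = -(∑ i : Fin K, L ρ (e i) * Sig (e i) (e m)) / L ρ ρ := by
      have h0 : ∀ i : Fin K, -(L ρ (e i) / L ρ ρ) * Sig (e i) (e m)
          = -(L ρ (e i) * Sig (e i) (e m)) / L ρ ρ := fun i => by ring
      simp only [h0]
      rw [← Finset.sum_div, Finset.sum_neg_distrib, neg_div]
    rw [this, hsum, neg_neg, mul_comm, mul_div_assoc, div_self hLρρ, mul_one]
  have hvec : Matrix.vecMul (fun i : Fin K => Sig ρ (e i)) (Sig.submatrix e e)⁻¹ = c := by
    rw [hrow, Matrix.vecMul_vecMul, hSinv, Matrix.vecMul_one]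
  rw [hvec]
  -- final computation
  have h := hstar ρ
  have hdot : dotProduct c (fun i : Fin K => Sig (e i) ρ)
      = ∑ i : Fin K, -(L ρ (e i) / L ρ ρ) * Sig (e i) ρ := rfl
  rw [hdot]
  have hexp : ∑ i : Fin K, -(L ρ (e i) / L ρ ρ) * Sig (e i) ρ
      = -(∑ i : Fin K, L ρ (e i) * Sig (e i) ρ) / L ρ ρ := by
    have h0 : ∀ i : Fin K, -(L ρ (e i) / L ρ ρ) * Sig (e i) ρ
        = -(L ρ (e i) * Sig (e i) ρ) / L ρ ρ := fun i => by ring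
    simp only [h0]
    rw [← Finset.sum_div, Finset.sum_neg_distrib, neg_div]
  rw [hexp]
  have hNval : N ρ ρ = 1 / L ρ ρ := by field_simp; linear_combination hNdiag
  rw [hNval] at h
  have h' : (∑ i : Fin K, L ρ (e i) * Sig (e i) ρ) * L ρ ρ
      + L ρ ρ * L ρ ρ * Sig ρ ρ = 1 := by
    have h2 : ((∑ i : Fin K, L ρ (e i) * Sig (e i) ρ) + L ρ ρ * Sig ρ ρ) * L ρ ρ
        = (1 / L ρ ρ) * L ρ ρ := by rw [h]
    rw [one_div, inv_mul_cancel₀ hLρρ] at h2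
    linear_combination h2
  field_simp
  linear_combination h'
end
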